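/- arXiv:2002.04782 — 9 statements merged into one kernel-verified Lean document; each statement's English description precedes it below -/
import Mathlib

section
/- Let A be a modal algebra in which 0 is the greatest lower bound of {◇ⁿ⊤ : n ∈ ω}. Then the map η_A : A → P(𝓕_Q(A)) given by η_A(x) = {F ∈ 𝓕_Q(A) : x ∈ F} is (i) injective, (ii) a homomorphism of Boolean algebras into the powerset Boolean algebra of 𝓕_Q(A), (iii) satisfies η_A(□x) = □_{Frm_Q(A)} η_A(x) for every x ∈ A, where □_{Frm_Q(A)} X = {F ∈ 𝓕_Q(A) : ∀G, (F,G) ∈ R_Q → G ∈ X}, and (iv) satisfies ⋂_{n∈ω} η_A(◇ⁿ⊤) = ∅. -/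
/-- A prime filter of a Boolean algebra: a proper filter `F` such that
`x ⊔ y ∈ F` implies `x ∈ F` or `y ∈ F`. -/
structure IsPrimeFilter {A : Type} [BooleanAlgebra A] (F : Set A) : Prop where
  top_mem : ⊤ ∈ F
  bot_not_mem : ⊥ ∉ F
  inf_mem : ∀ ⦃x⦄, x ∈ F → ∀ ⦃y⦄, y ∈ F → x ⊓ y ∈ F
  mem_of_le : ∀ ⦃x⦄, x ∈ F → ∀ ⦃y⦄, x ≤ y → y ∈ F
  prime : ∀ ⦃x y⦄, x ⊔ y ∈ F → x ∈ F ∨ y ∈ F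

/-- The diamond operation `◇x = ¬□¬x` of a modal algebra. -/
def diaA {A : Type} [BooleanAlgebra A] (box : A → A) (x : A) : A := (box xᶜ)ᶜ

/-- `dianA box n = ◇ⁿ⊤`. -/
def dianA {A : Type} [BooleanAlgebra A] (box : A → A) : ℕ → A
  | 0 => ⊤
  | n+1 => diaA box (dianA box n)

/-- `𝓕_Q(A)`: the prime filters `F` of `A` such that `◇ᵏ⊤ ∉ F` for some `k ∈ ω`. -/
def QFilt {A : Type} [BooleanAlgebra A] (box : A → A) : Type :=
  {F : Set A // IsPrimeFilter F ∧ ∃ k : ℕ, dianA box k ∉ F}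

/-- The relation `R_Q` on `𝓕_Q(A)`: `(F, G) ∈ R_Q` iff `□⁻¹F ⊆ G`. -/
def RQ {A : Type} [BooleanAlgebra A] (box : A → A) (F G : QFilt box) : Prop :=
  ∀ x : A, box x ∈ F.1 → x ∈ G.1

/-- The map `η_A(x) = {F ∈ 𝓕_Q(A) : x ∈ F}`. -/
def eta {A : Type} [BooleanAlgebra A] (box : A → A) (x : A) : Set (QFilt box) :=
  {F | x ∈ F.1}

/-- The box operator of the powerset modal algebra `Alg(F)` of a frame `F = (W, R)`. -/
def boxF {W : Type} (R : W → W → Prop) (X : Set W) : Set W :=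
  {w | ∀ w', R w w' → w' ∈ X}

/-- The diamond operator of `Alg(F)`: `◇_F X = R⁻¹[X]`. -/
def diaF {W : Type} (R : W → W → Prop) (X : Set W) : Set W :=
  {w | ∃ w', R w w' ∧ w' ∈ X}

section Aux
variable {A : Type} [BooleanAlgebra A]

structure IsFilt (F : Set A) : Prop where
  top_mem : ⊤ ∈ F
  inf_mem : ∀ ⦃x⦄, x ∈ F → ∀ ⦃y⦄, y ∈ F → x ⊓ y ∈ F
  mem_of_le : ∀ ⦃x⦄, x ∈ F → ∀ ⦃y⦄, x ≤ y → y ∈ F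

theorem extend_prime {H : Set A} (hH : IsFilt H) {x : A} (hx : x ∉ H) :
    ∃ G : Set A, IsPrimeFilter G ∧ H ⊆ G ∧ x ∉ G := by
  set S : Set (Set A) := {G | IsFilt G ∧ H ⊆ G ∧ x ∉ G} with hS
  have hub : ∀ c ⊆ S, IsChain (· ⊆ ·) c → c.Nonempty →
      ∃ ub ∈ S, ∀ s ∈ c, s ⊆ ub := by
    intro c hcS hchain hcne
    obtain ⟨G₀, hG₀⟩ := hcne
    refine ⟨⋃₀ c, ⟨⟨?_, ?_, ?_⟩, ?_, ?_⟩, fun s hs => Set.subset_sUnion_of_mem hs⟩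
    · exact ⟨G₀, hG₀, (hcS hG₀).1.top_mem⟩
    · rintro p ⟨G₁, hG₁, hp⟩ q ⟨G₂, hG₂, hq⟩
      rcases hchain.total hG₁ hG₂ with h | h
      · exact ⟨G₂, hG₂, (hcS hG₂).1.inf_mem (h hp) hq⟩
      · exact ⟨G₁, hG₁, (hcS hG₁).1.inf_mem hp (h hq)⟩
    · rintro p ⟨G₁, hG₁, hp⟩ q hpq
      exact ⟨G₁, hG₁, (hcS hG₁).1.mem_of_le hp hpq⟩
    · exact ((hcS hG₀).2.1).trans (Set.subset_sUnion_of_mem hG₀)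
    · rintro ⟨G₁, hG₁, hp⟩
      exact (hcS hG₁).2.2 hp
  obtain ⟨M, -, hM⟩ := zorn_subset_nonempty S hub H ⟨hH, subset_rfl, hx⟩
  obtain ⟨⟨htop, hinf, hup⟩, hHM, hxM⟩ := hM.1
  -- key: for a ∉ M, there is m ∈ M with m ⊓ a ≤ x
  have key : ∀ a : A, a ∉ M → ∃ m ∈ M, m ⊓ a ≤ x := by
    intro a haM
    set M' : Set A := {y | ∃ m ∈ M, m ⊓ a ≤ y} with hM'
    have hMM' : M ⊆ M' := fun m hm => ⟨m, hm, inf_le_left⟩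
    have haM' : a ∈ M' := ⟨⊤, htop, by simp⟩
    by_cases hxM' : x ∈ M'
    · exact hxM'
    · exfalso
      have : M' ∈ S := by
        refine ⟨⟨hMM' htop, ?_, ?_⟩, hHM.trans hMM', hxM'⟩
        · rintro p ⟨m₁, hm₁, h₁⟩ q ⟨m₂, hm₂, h₂⟩
          refine ⟨m₁ ⊓ m₂, hinf hm₁ hm₂, le_trans (le_inf ?_ ?_) (inf_le_inf h₁ h₂)⟩
          · exact inf_le_inf_right a inf_le_left
          · exact inf_le_inf_right a inf_le_right
        · rintro p ⟨m, hm, h⟩ q hpq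
          exact ⟨m, hm, h.trans hpq⟩
      exact haM (hM.2 this hMM' haM')
  have hbot : ⊥ ∉ M := fun h => hxM (hup h bot_le)
  refine ⟨M, ⟨htop, hbot, hinf, hup, ?_⟩, hHM, hxM⟩
  intro a b hab
  by_contra hc
  push_neg at hc
  obtain ⟨m₁, hm₁, h₁⟩ := key a hc.1
  obtain ⟨m₂, hm₂, h₂⟩ := key b hc.2
  have : (m₁ ⊓ m₂) ⊓ (a ⊔ b) ≤ x := by
    rw [inf_sup_left]
    refine sup_le ?_ ?_
    · exact le_trans (inf_le_inf (inf_le_left) le_rfl) h₁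
    · exact le_trans (inf_le_inf (inf_le_right) le_rfl) h₂
  exact hxM (hup (hinf (hinf hm₁ hm₂) hab) this)

theorem prime_ultra {F : Set A} (hF : IsPrimeFilter F) (x : A) : xᶜ ∈ F ↔ x ∉ F := by
  constructor
  · intro h hx
    exact hF.bot_not_mem (by simpa using hF.inf_mem hx h)
  · intro h
    rcases hF.prime (show x ⊔ xᶜ ∈ F by simpa using hF.top_mem) with h' | h'
    · exact absurd h' h
    · exact h'
end Aux

theorem stmt1 {A : Type} [BooleanAlgebra A] (box : A → A)
    (hbox_top : box ⊤ = ⊤) (hbox_inf : ∀ x y : A, box (x ⊓ y) = box x ⊓ box y)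
    (hglb : IsGLB (Set.range fun n : ℕ => dianA box n) (⊥ : A)) :
    Function.Injective (eta box) ∧
    (eta box (⊤ : A) = Set.univ ∧ eta box (⊥ : A) = ∅ ∧
      (∀ x y : A, eta box (x ⊓ y) = eta box x ∩ eta box y) ∧
      (∀ x y : A, eta box (x ⊔ y) = eta box x ∪ eta box y) ∧
      (∀ x : A, eta box xᶜ = (eta box x)ᶜ)) ∧
    (∀ x : A, eta box (box x) = boxF (RQ box) (eta box x)) ∧
    (⋂ n : ℕ, eta box (dianA box n)) = (∅ : Set (QFilt box)) := by

  -- box is monotone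
  have hmono : ∀ x y : A, x ≤ y → box x ≤ box y := by
    intro x y hxy
    have : x ⊓ y = x := inf_eq_left.mpr hxy
    calc box x = box (x ⊓ y) := by rw [this]
      _ = box x ⊓ box y := hbox_inf x y
      _ ≤ box y := inf_le_right
  -- existence of a QFilt element containing any nonzero a
  have hexists : ∀ a : A, a ≠ ⊥ → ∃ F : QFilt box, a ∈ F.1 := by
    intro a ha
    have hnotlb : ¬ (a ∈ lowerBounds (Set.range fun n : ℕ => dianA box n)) := by
      intro h
      exact ha (le_bot_iff.mp (hglb.2 h))
    obtain ⟨n, hn⟩ : ∃ n : ℕ, ¬ a ≤ dianA box n := by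
      by_contra hc
      push_neg at hc
      exact hnotlb (by rintro _ ⟨n, rfl⟩; exact hc n)
    set b := a ⊓ (dianA box n)ᶜ with hb
    have hbne : b ≠ ⊥ := by
      intro h
      rw [hb, ← sdiff_eq, sdiff_eq_bot_iff] at h
      exact hn h
    have hfilt : IsFilt {y : A | b ≤ y} :=
      ⟨le_top, fun p hp q hq => le_inf hp hq, fun p hp q hpq => hp.trans hpq⟩
    have hbotnot : (⊥ : A) ∉ {y : A | b ≤ y} := fun h => hbne (le_bot_iff.mp h)
    obtain ⟨G, hG, hHG, hxG⟩ := extend_prime hfilt hbotnot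
    have hbG : b ∈ G := hHG le_rfl
    have haG : a ∈ G := hG.mem_of_le hbG inf_le_left
    have hcG : (dianA box n)ᶜ ∈ G := hG.mem_of_le hbG inf_le_right
    have hdn : dianA box n ∉ G := (prime_ultra hG _).mp hcG
    exact ⟨⟨G, hG, n, hdn⟩, haG⟩
  refine ⟨?_, ⟨?_, ?_, ?_, ?_, ?_⟩, ?_, ?_⟩
  · -- injective
    intro x y hxy
    by_contra hne
    have key : ∀ u v : A, eta box u = eta box v → u ≤ v := by
      intro u v huv
      by_contra hle
      have hne' : u ⊓ vᶜ ≠ ⊥ := by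
        intro h
        rw [← sdiff_eq, sdiff_eq_bot_iff] at h
        exact hle h
      obtain ⟨F, hF⟩ := hexists _ hne'
      have huF : u ∈ F.1 := F.2.1.mem_of_le hF inf_le_left
      have hvcF : vᶜ ∈ F.1 := F.2.1.mem_of_le hF inf_le_right
      have hvF : v ∈ F.1 := by
        have : F ∈ eta box u := huF
        rw [huv] at this; exact this
      exact (prime_ultra F.2.1 v).mp hvcF hvF
    exact hne (le_antisymm (key _ _ hxy) (key _ _ hxy.symm))
  · ext F; simp [eta, F.2.1.top_mem]
  · ext F; simp [eta, F.2.1.bot_not_mem]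
  · intro x y
    ext F
    simp only [eta, Set.mem_setOf_eq, Set.mem_inter_iff]
    exact ⟨fun h => ⟨F.2.1.mem_of_le h inf_le_left, F.2.1.mem_of_le h inf_le_right⟩,
      fun ⟨h1, h2⟩ => F.2.1.inf_mem h1 h2⟩
  · intro x y
    ext F
    simp only [eta, Set.mem_setOf_eq, Set.mem_union]
    exact ⟨fun h => F.2.1.prime h,
      fun h => h.elim (fun h => F.2.1.mem_of_le h le_sup_left)
        (fun h => F.2.1.mem_of_le h le_sup_right)⟩
  · intro x
    ext F
    simp only [eta, Set.mem_setOf_eq, Set.mem_compl_iff]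
    exact prime_ultra F.2.1 x
  · -- box
    intro x
    ext F
    simp only [eta, boxF, Set.mem_setOf_eq]
    constructor
    · intro h G hRG
      exact hRG x h
    · intro h
      by_contra hbx
      have hfilt : IsFilt (box ⁻¹' F.1) := by
        refine ⟨?_, ?_, ?_⟩
        · simp only [Set.mem_preimage, hbox_top]; exact F.2.1.top_mem
        · intro p hp q hq
          simp only [Set.mem_preimage, hbox_inf]
          exact F.2.1.inf_mem hp hq
        · intro p hp q hpq
          exact F.2.1.mem_of_le hp (hmono _ _ hpq)
      obtain ⟨G, hG, hHG, hxG⟩ := extend_prime hfilt (show x ∉ box ⁻¹' F.1 from hbx)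
      -- G omits some dianA
      obtain ⟨k, hk⟩ := F.2.2
      obtain ⟨m, rfl⟩ : ∃ m, k = m + 1 := by
        cases k with
        | zero => exact absurd F.2.1.top_mem (by simpa [dianA] using hk)
        | succ m => exact ⟨m, rfl⟩
      have hboxc : box (dianA box m)ᶜ ∈ F.1 := by
        have : (diaA box (dianA box m))ᶜ ∈ F.1 := (prime_ultra F.2.1 _).mpr hk
        simpa [diaA] using this
      have hcG : (dianA box m)ᶜ ∈ G := hHG hboxc
      have hdG : dianA box m ∉ G := (prime_ultra hG _).mp hcG
      have : x ∈ G := h ⟨G, hG, m, hdG⟩ (fun z hz => hHG hz)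
      exact hxG this
  · ext F
    simp only [Set.mem_iInter, Set.mem_empty_iff_false, iff_false, not_forall]
    obtain ⟨k, hk⟩ := F.2.2
    exact ⟨k, hk⟩
end

section
/- Let A be a modal algebra in which 0 is the greatest lower bound of {◇ⁿ⊤ : n ∈ ω}. For any k ∈ ω and any x₁, …, x_k ∈ A, define g : A → A by g(c) = □(x_k ⊔ □(x_{k-1} ⊔ ⋯ □(x₂ ⊔ □(x₁ ⊔ c)) ⋯ )) (with g(c) = c when k = 0). Then g(0) is the greatest lower bound of the set {g(◇ⁿ⊤) : n ∈ ω}. -/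
/-- `nest box [x₁, …, x_k] c = □(x_k ⊔ □(x_{k-1} ⊔ ⋯ □(x₂ ⊔ □(x₁ ⊔ c)) ⋯ ))`,
defined by `nest box [] c = c` and `nest box (xs ++ [x]) c = □(x ⊔ nest box xs c)`. -/
def nest {A : Type} [BooleanAlgebra A] (box : A → A) (l : List A) (c : A) : A :=
  l.foldl (fun acc x => box (x ⊔ acc)) c

section Aux

variable {A : Type} [BooleanAlgebra A] (box : A → A)

theorem boxMonoAux (hbox_inf : ∀ x y : A, box (x ⊓ y) = box x ⊓ box y) {x y : A} (h : x ≤ y) : box x ≤ box y := by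
  have : box (x ⊓ y) = box x ⊓ box y := hbox_inf x y
  rw [inf_eq_left.mpr h] at this
  rw [this]; exact inf_le_right

theorem diaMonoAux (hbox_inf : ∀ x y : A, box (x ⊓ y) = box x ⊓ box y) {x y : A} (h : x ≤ y) : diaA box x ≤ diaA box y := by
  unfold diaA
  exact compl_le_compl (boxMonoAux box hbox_inf (compl_le_compl h))

theorem diaIterMonoAux (hbox_inf : ∀ x y : A, box (x ⊓ y) = box x ⊓ box y) (n : ℕ) {x y : A} (h : x ≤ y) :
    (diaA box)^[n] x ≤ (diaA box)^[n] y := by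
  induction n generalizing x y with
  | zero => simpa using h
  | succ k ih =>
    rw [Function.iterate_succ', Function.comp_apply, Function.comp_apply]
    exact diaMonoAux box hbox_inf (ih h)

theorem nestConsAux (x : A) (xs : List A) (c : A) :
    nest box (x :: xs) c = nest box xs (box (x ⊔ c)) := rfl

theorem nestMonoAux (hbox_inf : ∀ x y : A, box (x ⊓ y) = box x ⊓ box y) (l : List A) {c d : A} (h : c ≤ d) :
    nest box l c ≤ nest box l d := by
  induction l generalizing c d with
  | nil => exact h
  | cons x xs ih =>
    rw [nestConsAux, nestConsAux]
    exact ih (boxMonoAux box hbox_inf (sup_le_sup_left h x))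

/-- core modal fact: `□p ⊓ ¬□q ≤ ◇(p ⊓ ¬q)` -/
theorem coreAux (hbox_inf : ∀ x y : A, box (x ⊓ y) = box x ⊓ box y) (p q : A) : box p ⊓ (box q)ᶜ ≤ diaA box (p ⊓ qᶜ) := by
  unfold diaA
  have h1 : p ⊓ (p ⊓ qᶜ)ᶜ ≤ q := by
    rw [compl_inf, compl_compl, inf_sup_left]
    simp
  have h2 : box p ⊓ box ((p ⊓ qᶜ)ᶜ) ≤ box q := by
    rw [← hbox_inf]; exact boxMonoAux box hbox_inf h1
  have h3 : box p ⊓ (box q)ᶜ ⊓ box ((p ⊓ qᶜ)ᶜ) ≤ ⊥ := by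
    calc box p ⊓ (box q)ᶜ ⊓ box ((p ⊓ qᶜ)ᶜ)
        = (box p ⊓ box ((p ⊓ qᶜ)ᶜ)) ⊓ (box q)ᶜ := by ac_rfl
      _ ≤ box q ⊓ (box q)ᶜ := inf_le_inf_right _ h2
      _ = ⊥ := inf_compl_eq_bot
  exact le_compl_iff_disjoint_right.mpr (disjoint_iff_inf_le.mpr h3)

theorem keyAux (hbox_inf : ∀ x y : A, box (x ⊓ y) = box x ⊓ box y) (l : List A) (a b : A) :
    nest box l a ⊓ (nest box l b)ᶜ ≤ (diaA box)^[l.length] (a ⊓ bᶜ) := by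
  induction l generalizing a b with
  | nil => simp [nest]
  | cons x xs ih =>
    rw [nestConsAux, nestConsAux]
    calc nest box xs (box (x ⊔ a)) ⊓ (nest box xs (box (x ⊔ b)))ᶜ
        ≤ (diaA box)^[xs.length] (box (x ⊔ a) ⊓ (box (x ⊔ b))ᶜ) := ih _ _
      _ ≤ (diaA box)^[xs.length] (diaA box ((x ⊔ a) ⊓ (x ⊔ b)ᶜ)) :=
          diaIterMonoAux box hbox_inf _ (coreAux box hbox_inf _ _)
      _ ≤ (diaA box)^[xs.length] (diaA box (a ⊓ bᶜ)) := by
          refine diaIterMonoAux box hbox_inf _ (diaMonoAux box hbox_inf ?_)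
          rw [compl_sup, inf_sup_right]
          refine sup_le ?_ (inf_le_inf_left a inf_le_right)
          rw [← inf_assoc, inf_compl_eq_bot, bot_inf_eq]
          exact bot_le
      _ = (diaA box)^[(x :: xs).length] (a ⊓ bᶜ) := by
          rw [List.length_cons, Function.iterate_succ_apply]

theorem dianIterAux (k n : ℕ) :
    (diaA box)^[k] (dianA box n) = dianA box (k + n) := by
  induction k with
  | zero => simp
  | succ m ih =>
    rw [Function.iterate_succ', Function.comp_apply, ih]
    show diaA box (dianA box (m + n)) = dianA box (m + 1 + n)
    have : m + 1 + n = (m + n) + 1 := by omega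
    rw [this]
    rfl

theorem dianAntitoneAux (hbox_inf : ∀ x y : A, box (x ⊓ y) = box x ⊓ box y) {m n : ℕ} (h : m ≤ n) :
    dianA box n ≤ dianA box m := by
  induction n with
  | zero => simpa [Nat.le_zero.mp h]
  | succ k ih =>
    rcases Nat.lt_or_ge m (k+1) with h' | h'
    · have step : dianA box (k+1) ≤ dianA box k := by
        clear ih h h' 
        induction k with
        | zero => exact le_top
        | succ j ihj => exact diaMonoAux box hbox_inf ihj
      exact le_trans step (ih (Nat.lt_succ_iff.mp h'))
    · have : m = k + 1 := le_antisymm h h'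
      rw [this]

end Aux

theorem stmt2 {A : Type} [BooleanAlgebra A] (box : A → A)
    (hbox_top : box ⊤ = ⊤) (hbox_inf : ∀ x y : A, box (x ⊓ y) = box x ⊓ box y)
    (hglb : IsGLB (Set.range fun n : ℕ => dianA box n) (⊥ : A))
    (l : List A) :
    IsGLB (Set.range fun n : ℕ => nest box l (dianA box n)) (nest box l (⊥ : A)) := by
  constructor
  · rintro _ ⟨n, rfl⟩
    exact nestMonoAux box hbox_inf l bot_le
  · intro b hb
    have h1 : ∀ n : ℕ, b ⊓ (nest box l ⊥)ᶜ ≤ dianA box n := by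
      intro n
      calc b ⊓ (nest box l ⊥)ᶜ
          ≤ nest box l (dianA box n) ⊓ (nest box l ⊥)ᶜ :=
            inf_le_inf_right _ (hb ⟨n, rfl⟩)
        _ ≤ (diaA box)^[l.length] (dianA box n ⊓ (⊥ : A)ᶜ) := keyAux box hbox_inf l _ _
        _ = dianA box (l.length + n) := by rw [compl_bot, inf_top_eq, dianIterAux]
        _ ≤ dianA box n := dianAntitoneAux box hbox_inf (Nat.le_add_left n l.length)
    have h2 : b ⊓ (nest box l ⊥)ᶜ ≤ ⊥ := by
      refine hglb.2 ?_
      rintro _ ⟨n, rfl⟩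
      exact h1 n
    have h3 : b \ nest box l ⊥ = ⊥ := by
      rw [sdiff_eq]
      exact le_bot_iff.mp h2
    exact sdiff_eq_bot_iff.mp h3
end

section
/- (Soundness of NGL.) For every modal formula φ, if φ is derivable in NGL, then every transitive Kripke frame of locally finite height validates φ. -/
/-- Modal formulas over a countable set of propositional variables. -/
inductive Fml : Type where
  | prop : ℕ → Fml
  | top : Fml
  | and : Fml → Fml → Fml
  | neg : Fml → Fml
  | box : Fml → Fml

namespace Fml
/-- `⊥` abbreviates `¬⊤`. -/
def bot : Fml := neg top
/-- `φ ∨ ψ` abbreviates `¬(¬φ ∧ ¬ψ)`. -/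
def or (φ ψ : Fml) : Fml := neg (and (neg φ) (neg ψ))
/-- `φ ⊃ ψ` abbreviates `¬(φ ∧ ¬ψ)`. -/
def imp (φ ψ : Fml) : Fml := neg (and φ (neg ψ))
/-- `◇φ` abbreviates `¬□¬φ`. -/
def dia (φ : Fml) : Fml := neg (box (neg φ))
/-- `◇ⁿφ`: n-fold application of `◇`. -/
def dian : ℕ → Fml → Fml
  | 0, φ => φ
  | n+1, φ => dia (dian n φ)
end Fml

/-- Truth of a modal formula at a world of a Kripke model `(W, R, v)`. -/
def Truth {W : Type} (R : W → W → Prop) (v : ℕ → Set W) : Fml → W → Prop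
  | .prop n, w => w ∈ v n
  | .top, _ => True
  | .and φ ψ, w => Truth R v φ w ∧ Truth R v ψ w
  | .neg φ, w => ¬ Truth R v φ w
  | .box φ, w => ∀ w', R w w' → Truth R v φ w'

/-- A frame validates `φ` if `φ` is true at every world under every valuation. -/
def Valid {W : Type} (R : W → W → Prop) (φ : Fml) : Prop :=
  ∀ (v : ℕ → Set W) (w : W), Truth R v φ w

/-- A frame is of locally finite height if for every world `w`, the supremum of
lengths of `R`-chains starting at `w` is finite. -/
def LocallyFiniteHeight {W : Type} (R : W → W → Prop) : Prop :=
  ∀ w : W, ∃ N : ℕ, ∀ (n : ℕ) (c : ℕ → W),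
    c 0 = w → (∀ i < n, R (c i) (c (i+1))) → n ≤ N

/-- Boolean evaluation treating propositional variables and boxed formulas as atoms. -/
def beval (f : Fml → Bool) : Fml → Bool
  | .prop n => f (.prop n)
  | .top => true
  | .and φ ψ => beval f φ && beval f ψ
  | .neg φ => !(beval f φ)
  | .box φ => f (.box φ)

/-- Classical propositional tautologies (in the modal language). -/
def Taut (φ : Fml) : Prop := ∀ f : Fml → Bool, beval f φ = true

/-- Uniform substitution. -/
def fsubst (σ : ℕ → Fml) : Fml → Fml
  | .prop n => σ n
  | .top => .top
  | .and φ ψ => .and (fsubst σ φ) (fsubst σ ψ)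
  | .neg φ => .neg (fsubst σ φ)
  | .box φ => .box (fsubst σ φ)

/-- The axiom K : `□(p ⊃ q) ⊃ (□p ⊃ □q)`. -/
def axK : Fml :=
  Fml.imp (Fml.box (Fml.imp (Fml.prop 0) (Fml.prop 1)))
    (Fml.imp (Fml.box (Fml.prop 0)) (Fml.box (Fml.prop 1)))

/-- The axiom 4 : `□p ⊃ □□p`. -/
def axFour : Fml :=
  Fml.imp (Fml.box (Fml.prop 0)) (Fml.box (Fml.box (Fml.prop 0)))

/-- The Löb formula : `□(□p ⊃ p) ⊃ □p`. -/
def axLob : Fml :=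
  Fml.imp (Fml.box (Fml.imp (Fml.box (Fml.prop 0)) (Fml.prop 0)))
    (Fml.box (Fml.prop 0))

/-- The proof system `NGL`: classical tautologies, K, 4, modus ponens, uniform
substitution, generalization, and the non-compactness rule. -/
inductive NGL : Fml → Prop where
  | taut {φ} : Taut φ → NGL φ
  | axK : NGL axK
  | ax4 : NGL axFour
  | mp {φ ψ} : NGL (Fml.imp φ ψ) → NGL φ → NGL ψ
  | usub {φ} (σ : ℕ → Fml) : NGL φ → NGL (fsubst σ φ)
  | nec {φ} : NGL φ → NGL (Fml.box φ)
  | nc {φ} : (∀ n : ℕ, NGL (Fml.imp φ (Fml.dian n Fml.top))) → NGL (Fml.imp φ Fml.bot)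

attribute [local instance] Classical.propDecidable

lemma truth_beval {W : Type} (R : W → W → Prop) (v : ℕ → Set W) (w : W) (φ : Fml) :
    beval (fun ψ => decide (Truth R v ψ w)) φ = true ↔ Truth R v φ w := by
  induction φ with
  | prop n => simp only [beval]; exact decide_eq_true_iff
  | top => simp [beval, Truth]
  | and φ ψ ih1 ih2 => simp [beval, Truth, ih1, ih2]
  | neg φ ih => simp [beval, Truth, ← ih]
  | box φ _ => simp [beval]

lemma truth_imp {W : Type} {R : W → W → Prop} {v : ℕ → Set W} {w : W} {φ ψ : Fml} :
    Truth R v (Fml.imp φ ψ) w ↔ (Truth R v φ w → Truth R v ψ w) := by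
  simp [Fml.imp, Truth]

lemma truth_fsubst {W : Type} (R : W → W → Prop) (v : ℕ → Set W) (σ : ℕ → Fml) (φ : Fml) :
    ∀ w : W, Truth R (fun n => {x | Truth R v (σ n) x}) φ w ↔ Truth R v (fsubst σ φ) w := by
  induction φ with
  | prop n => intro w; exact Iff.rfl
  | top => intro w; simp [Truth, fsubst]
  | and φ ψ ih1 ih2 => intro w; simp [Truth, fsubst, ih1 w, ih2 w]
  | neg φ ih => intro w; simp [Truth, fsubst, ih w]
  | box φ ih =>
      intro w
      constructor
      · intro h w' hw; exact (ih w').mp (h w' hw)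
      · intro h w' hw; exact (ih w').mpr (h w' hw)

lemma truth_dia {W : Type} {R : W → W → Prop} {v : ℕ → Set W} {w : W} {φ : Fml} :
    Truth R v (Fml.dia φ) w ↔ ∃ w', R w w' ∧ Truth R v φ w' := by
  simp [Fml.dia, Truth]

lemma truth_dian {W : Type} (R : W → W → Prop) (v : ℕ → Set W) (n : ℕ) :
    ∀ w : W, Truth R v (Fml.dian n Fml.top) w ↔
      ∃ c : ℕ → W, c 0 = w ∧ ∀ i < n, R (c i) (c (i+1)) := by
  induction n with
  | zero =>
      intro w
      simp only [Fml.dian, Truth]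
      constructor
      · intro _; exact ⟨fun _ => w, rfl, fun i hi => absurd hi (Nat.not_lt_zero i)⟩
      · intro _; trivial
  | succ n ih =>
      intro w
      rw [show Fml.dian (n+1) Fml.top = Fml.dia (Fml.dian n Fml.top) from rfl, truth_dia]
      constructor
      · rintro ⟨w', hR, hw'⟩
        obtain ⟨c, hc0, hc⟩ := (ih w').mp hw'
        refine ⟨fun i => match i with | 0 => w | i+1 => c i, rfl, ?_⟩
        intro i hi
        match i with
        | 0 => simpa [hc0] using hR
        | i+1 => exact hc i (by omega)
      · rintro ⟨c, hc0, hc⟩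
        refine ⟨c 1, by rw [← hc0]; exact hc 0 (by omega), ?_⟩
        exact (ih (c 1)).mpr ⟨fun i => c (i+1), rfl, fun i hi => hc (i+1) (by omega)⟩

theorem stmt4 (φ : Fml) (h : NGL φ) :
    ∀ (W : Type) [Nonempty W] (R : W → W → Prop),
      Transitive R → LocallyFiniteHeight R → Valid R φ := by
  induction h with
  | @taut φ ht =>
      intro W _ R _ _ v w
      exact (truth_beval R v w φ).mp (ht _)
  | axK =>
      intro W _ R _ _ v w
      rw [show axK = Fml.imp (Fml.box (Fml.imp (.prop 0) (.prop 1)))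
        (Fml.imp (Fml.box (.prop 0)) (Fml.box (.prop 1))) from rfl, truth_imp, truth_imp]
      intro h1 h2 w' hw
      exact truth_imp.mp (h1 w' hw) (h2 w' hw)
  | ax4 =>
      intro W _ R hT _ v w
      rw [show axFour = Fml.imp (Fml.box (.prop 0)) (Fml.box (Fml.box (.prop 0))) from rfl,
        truth_imp]
      intro h1 w' hw w'' hw'
      exact h1 w'' (hT hw hw')
  | mp h1 h2 ih1 ih2 =>
      intro W _ R hT hL v w
      exact truth_imp.mp (ih1 W R hT hL v w) (ih2 W R hT hL v w)
  | @usub φ σ h ih =>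
      intro W _ R hT hL v w
      exact (truth_fsubst R v σ φ w).mp (ih W R hT hL _ w)
  | nec h ih =>
      intro W _ R hT hL v w w' _
      exact ih W R hT hL v w'
  | @nc φ h ih =>
      intro W _ R hT hL v w
      rw [truth_imp]
      intro hφ
      obtain ⟨N, hN⟩ := hL w
      have := truth_imp.mp (ih (N+1) W R hT hL v w) hφ
      obtain ⟨c, hc0, hc⟩ := (truth_dian R v (N+1) w).mp this
      have := hN (N+1) c hc0 hc
      omega
end

section
/- NGL is a proof system for the logic of provability: for every modal formula φ, φ ∈ GL if and only if φ is derivable in NGL. -/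
/-- The logic `GL`: the smallest normal modal logic containing the Löb formula. -/
inductive GLProv : Fml → Prop where
  | taut {φ} : Taut φ → GLProv φ
  | axK : GLProv axK
  | axLob : GLProv axLob
  | mp {φ ψ} : GLProv (Fml.imp φ ψ) → GLProv φ → GLProv ψ
  | usub {φ} (σ : ℕ → Fml) : GLProv φ → GLProv (fsubst σ φ)
  | nec {φ} : GLProv φ → GLProv (Fml.box φ)
section Infra

deriving instance DecidableEq for Fml

/-- Shared Hilbert-style interface of GL and NGL. -/
structure Sys (S : Fml → Prop) : Prop where
  taut : ∀ {φ}, Taut φ → S φ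
  K : ∀ a b : Fml, S ((Fml.box (a.imp b)).imp ((Fml.box a).imp (Fml.box b)))
  mp : ∀ {φ ψ}, S (φ.imp ψ) → S φ → S ψ
  nec : ∀ {φ}, S φ → S (Fml.box φ)

lemma fsubst_imp (σ : ℕ → Fml) (a b : Fml) :
    fsubst σ (a.imp b) = (fsubst σ a).imp (fsubst σ b) := rfl

lemma sysGL : Sys GLProv := by
  refine ⟨fun h => GLProv.taut h, ?_, fun h1 h2 => GLProv.mp h1 h2, fun h => GLProv.nec h⟩
  intro a b
  have := GLProv.usub (fun n => if n = 0 then a else b) GLProv.axK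
  simpa [axK, fsubst, Fml.imp] using this

lemma sysNGL : Sys NGL := by
  refine ⟨fun h => NGL.taut h, ?_, fun h1 h2 => NGL.mp h1 h2, fun h => NGL.nec h⟩
  intro a b
  have := NGL.usub (fun n => if n = 0 then a else b) NGL.axK
  simpa [axK, fsubst, Fml.imp] using this

end Infra

namespace GLW
section PropLogic

variable {S : Fml → Prop}

lemma imp_self (hS : Sys S) (a : Fml) : S (a.imp a) :=
  hS.taut (by intro f; simp only [Fml.imp, beval]; cases beval f a <;> rfl)

lemma imp_of (hS : Sys S) (a : Fml) {b : Fml} (h : S b) : S (a.imp b) :=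
  hS.mp (hS.taut (by intro f; simp only [Fml.imp, beval]; cases beval f a <;> cases beval f b <;> rfl)) h

lemma imp_trans (hS : Sys S) {a b c : Fml} (h1 : S (a.imp b)) (h2 : S (b.imp c)) : S (a.imp c) := by
  have t : S ((a.imp b).imp ((b.imp c).imp (a.imp c))) := hS.taut (by
    intro f; simp only [Fml.imp, beval]
    cases beval f a <;> cases beval f b <;> cases beval f c <;> rfl)
  exact hS.mp (hS.mp t h1) h2

lemma and_intro (hS : Sys S) {a b c : Fml} (h1 : S (a.imp b)) (h2 : S (a.imp c)) : S (a.imp (b.and c)) := by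
  have t : S ((a.imp b).imp ((a.imp c).imp (a.imp (b.and c)))) := hS.taut (by
    intro f; simp only [Fml.imp, beval]
    cases beval f a <;> cases beval f b <;> cases beval f c <;> rfl)
  exact hS.mp (hS.mp t h1) h2

lemma and_left (hS : Sys S) (a b : Fml) : S ((a.and b).imp a) :=
  hS.taut (by intro f; simp only [Fml.imp, beval]; cases beval f a <;> cases beval f b <;> rfl)

lemma and_right (hS : Sys S) (a b : Fml) : S ((a.and b).imp b) :=
  hS.taut (by intro f; simp only [Fml.imp, beval]; cases beval f a <;> cases beval f b <;> rfl)

lemma contrapose (hS : Sys S) {a b : Fml} (h : S (a.imp b)) : S ((b.neg).imp (a.neg)) := by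
  have t : S ((a.imp b).imp ((b.neg).imp (a.neg))) := hS.taut (by
    intro f; simp only [Fml.imp, beval]
    cases beval f a <;> cases beval f b <;> rfl)
  exact hS.mp t h

/-- from `a ⊃ (b ⊃ c)` and `a ⊃ b` infer `a ⊃ c`. -/
lemma imp_mp (hS : Sys S) {a b c : Fml} (h1 : S (a.imp (b.imp c))) (h2 : S (a.imp b)) : S (a.imp c) := by
  have t : S ((a.imp (b.imp c)).imp ((a.imp b).imp (a.imp c))) := hS.taut (by
    intro f; simp only [Fml.imp, beval]
    cases beval f a <;> cases beval f b <;> cases beval f c <;> rfl)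
  exact hS.mp (hS.mp t h1) h2

/-- from `a ⊃ b` and `a ⊃ ¬b` infer `a ⊃ ⊥`. -/
lemma imp_absurd (hS : Sys S) {a b : Fml} (h1 : S (a.imp b)) (h2 : S (a.imp b.neg)) : S (a.imp Fml.bot) := by
  have t : S ((a.imp b).imp ((a.imp b.neg).imp (a.imp Fml.bot))) := hS.taut (by
    intro f; simp only [Fml.imp, Fml.bot, beval]
    cases beval f a <;> cases beval f b <;> rfl)
  exact hS.mp (hS.mp t h1) h2

lemma uncurry (hS : Sys S) {a b c : Fml} (h : S (a.imp (b.imp c))) : S ((a.and b).imp c) := by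
  have t : S ((a.imp (b.imp c)).imp ((a.and b).imp c)) := hS.taut (by
    intro f; simp only [Fml.imp, beval]
    cases beval f a <;> cases beval f b <;> cases beval f c <;> rfl)
  exact hS.mp t h

lemma curry (hS : Sys S) {a b c : Fml} (h : S ((a.and b).imp c)) : S (a.imp (b.imp c)) := by
  have t : S (((a.and b).imp c).imp (a.imp (b.imp c))) := hS.taut (by
    intro f; simp only [Fml.imp, beval]
    cases beval f a <;> cases beval f b <;> cases beval f c <;> rfl)
  exact hS.mp t h

end PropLogic

section ModalRules

variable {S : Fml → Prop}

/-- K-distribution. -/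
lemma kd (hS : Sys S) {a b : Fml} (h : S (a.imp b)) : S ((Fml.box a).imp (Fml.box b)) :=
  hS.mp (hS.K a b) (hS.nec h)

lemma box_and (hS : Sys S) (a b : Fml) : S (((Fml.box a).and (Fml.box b)).imp (Fml.box (a.and b))) := by
  have t : S (a.imp (b.imp (a.and b))) := hS.taut (by
    intro f; simp only [Fml.imp, beval]
    cases beval f a <;> cases beval f b <;> rfl)
  have h1 : S ((Fml.box a).imp (Fml.box (b.imp (a.and b)))) := kd hS t
  have h2 : S ((Fml.box a).imp ((Fml.box b).imp (Fml.box (a.and b)))) :=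
    imp_trans hS h1 (hS.K b (a.and b))
  exact uncurry hS h2

lemma dia_mono (hS : Sys S) {a b : Fml} (h : S (a.imp b)) : S ((Fml.dia a).imp (Fml.dia b)) :=
  contrapose hS (kd hS (contrapose hS h))

lemma dian_mono (hS : Sys S) {a b : Fml} (n : ℕ) (h : S (a.imp b)) :
    S ((Fml.dian n a).imp (Fml.dian n b)) := by
  induction n with
  | zero => exact h
  | succ n ih => exact dia_mono hS ih

/-- `□a ∧ ◇b ⊃ ◇(a ∧ b)`. -/
lemma box_dia (hS : Sys S) (a b : Fml) :
    S (((Fml.box a).and (Fml.dia b)).imp (Fml.dia (a.and b))) := by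
  have t : S (a.imp (((a.and b).neg).imp b.neg)) := hS.taut (by
    intro f; simp only [Fml.imp, beval]
    cases beval f a <;> cases beval f b <;> rfl)
  have h1 : S ((Fml.box a).imp ((Fml.box ((a.and b).neg)).imp (Fml.box b.neg))) :=
    imp_trans hS (kd hS t) (hS.K ((a.and b).neg) b.neg)
  -- glue: (x ⊃ (y ⊃ z)) ⊃ ((x ∧ ¬z) ⊃ ¬y)
  have t2 : S (((Fml.box a).imp ((Fml.box ((a.and b).neg)).imp (Fml.box b.neg))).imp
      (((Fml.box a).and ((Fml.box b.neg).neg)).imp ((Fml.box ((a.and b).neg)).neg))) := hS.taut (by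
    intro f; simp only [Fml.imp, beval]
    cases f (Fml.box a) <;> cases f (Fml.box ((a.and b).neg)) <;> cases f (Fml.box b.neg) <;> rfl)
  exact hS.mp t2 h1

end ModalRules

end GLW
namespace GLW

variable {S : Fml → Prop}

lemma imp_top (hS : Sys S) (a : Fml) : S (a.imp Fml.top) :=
  hS.taut (by intro f; simp only [Fml.imp, beval]; cases beval f a <;> rfl)

lemma dne (hS : Sys S) (a : Fml) : S ((a.neg.neg).imp a) :=
  hS.taut (by intro f; simp only [Fml.imp, beval]; cases beval f a <;> rfl)

/-- from `x ⊃ (a ⊃ b)` and `x ⊃ ¬b` infer `x ⊃ ¬a`. -/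
lemma imp_mt (hS : Sys S) {x a b : Fml} (h1 : S (x.imp (a.imp b))) (h2 : S (x.imp b.neg)) :
    S (x.imp a.neg) := by
  have t : S ((x.imp (a.imp b)).imp ((x.imp b.neg).imp (x.imp a.neg))) := hS.taut (by
    intro f; simp only [Fml.imp, beval]
    cases beval f x <;> cases beval f a <;> cases beval f b <;> rfl)
  exact hS.mp (hS.mp t h1) h2

/-- `((a ∧ ¬b) ⊃ ⊥) ⊃ (a ⊃ b)`. -/
lemma imp_of_negand (hS : Sys S) {a b : Fml} (h : S ((a.and b.neg).imp Fml.bot)) :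
    S (a.imp b) := by
  have t : S (((a.and b.neg).imp Fml.bot).imp (a.imp b)) := hS.taut (by
    intro f; simp only [Fml.imp, Fml.bot, beval]
    cases beval f a <;> cases beval f b <;> rfl)
  exact hS.mp t h

/-- Löb instances in GL. -/
lemma gl_lob (a : Fml) : GLProv ((Fml.box ((Fml.box a).imp a)).imp (Fml.box a)) := by
  have := GLProv.usub (fun _ => a) GLProv.axLob
  simpa [axLob, fsubst, Fml.imp] using this

/-- 4 instances in NGL. -/
lemma ngl_four (a : Fml) : NGL ((Fml.box a).imp (Fml.box (Fml.box a))) := by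
  have := NGL.usub (fun _ => a) NGL.ax4
  simpa [axFour, fsubst, Fml.imp] using this

/-- GL proves the 4 axiom. -/
lemma gl_four : GLProv axFour := by
  have hS := sysGL
  set p : Fml := Fml.prop 0 with hp
  set A : Fml := p.and (Fml.box p) with hA
  -- □A ⊃ □p
  have h1 : GLProv ((Fml.box A).imp (Fml.box p)) := kd hS (and_left hS p (Fml.box p))
  -- p ⊃ (□A ⊃ A)
  have h2 : GLProv (p.imp ((Fml.box A).imp A)) := by
    refine curry hS (and_intro hS ?_ ?_)
    · exact and_left hS p (Fml.box A)
    · exact imp_trans hS (and_right hS p (Fml.box A)) h1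
  -- □p ⊃ □(□A ⊃ A)
  have h3 : GLProv ((Fml.box p).imp (Fml.box ((Fml.box A).imp A))) := kd hS h2
  -- □p ⊃ □A
  have h4 : GLProv ((Fml.box p).imp (Fml.box A)) := imp_trans hS h3 (gl_lob A)
  -- □A ⊃ □□p
  have h5 : GLProv ((Fml.box A).imp (Fml.box (Fml.box p))) := kd hS (and_right hS p (Fml.box p))
  exact imp_trans hS h4 h5

/-- NGL proves the Löb axiom. -/
lemma ngl_lob : NGL axLob := by
  have hS := sysNGL
  set p : Fml := Fml.prop 0 with hp
  set A : Fml := Fml.box ((Fml.box p).imp p) with hA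
  set L : Fml := A.and (Fml.box p).neg with hL
  -- L ⊃ □A
  have h4A : NGL (A.imp (Fml.box A)) := by
    have := ngl_four ((Fml.box p).imp p); rwa [← hA] at this
  have hLA : NGL (L.imp A) := and_left hS A (Fml.box p).neg
  have hLboxA : NGL (L.imp (Fml.box A)) := imp_trans hS hLA h4A
  -- L ⊃ □(A ∧ (□p ⊃ p))
  have hbig : NGL (L.imp (Fml.box (A.and ((Fml.box p).imp p)))) := by
    have h1 : NGL (L.imp ((Fml.box A).and A)) := and_intro hS hLboxA hLA
    have h2 : NGL (((Fml.box A).and A).imp (Fml.box (A.and ((Fml.box p).imp p)))) := by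
      have := box_and hS A ((Fml.box p).imp p); rwa [← hA] at this
    exact imp_trans hS h1 h2
  -- L ⊃ ◇¬p
  have hdia : NGL (L.imp (Fml.dia p.neg)) := by
    have h1 : NGL ((Fml.box p.neg.neg).imp (Fml.box p)) := kd hS (dne hS p)
    have h2 : NGL (((Fml.box p).neg).imp (Fml.dia p.neg)) := contrapose hS h1
    exact imp_trans hS (and_right hS A (Fml.box p).neg) h2
  -- L ⊃ ◇((A ∧ (□p⊃p)) ∧ ¬p)
  have h3 : NGL (L.imp (Fml.dia ((A.and ((Fml.box p).imp p)).and p.neg))) := by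
    have hab := box_dia hS (A.and ((Fml.box p).imp p)) p.neg
    exact imp_trans hS (and_intro hS hbig hdia) hab
  -- ((A ∧ (□p⊃p)) ∧ ¬p) ⊃ L
  have h4 : NGL (((A.and ((Fml.box p).imp p)).and p.neg).imp L) := by
    set c : Fml := (A.and ((Fml.box p).imp p)).and p.neg with hc
    have hca : NGL (c.imp A) :=
      imp_trans hS (and_left hS _ _) (and_left hS _ _)
    have hcip : NGL (c.imp ((Fml.box p).imp p)) :=
      imp_trans hS (and_left hS _ _) (and_right hS _ _)
    have hcnp : NGL (c.imp p.neg) := and_right hS _ _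
    have hcnb : NGL (c.imp (Fml.box p).neg) := imp_mt hS hcip hcnp
    exact and_intro hS hca hcnb
  -- L ⊃ ◇L
  have hstep : NGL (L.imp (Fml.dia L)) := imp_trans hS h3 (dia_mono hS h4)
  -- L ⊃ ◇ⁿL
  have hchain : ∀ n, NGL (L.imp (Fml.dian n L)) := by
    intro n; induction n with
    | zero => exact imp_self hS L
    | succ n ih => exact imp_trans hS hstep (dia_mono hS ih)
  -- L ⊃ ◇ⁿ⊤
  have htop : ∀ n, NGL (L.imp (Fml.dian n Fml.top)) := fun n =>
    imp_trans hS (hchain n) (dian_mono hS n (imp_top hS L))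
  have hbot : NGL (L.imp Fml.bot) := NGL.nc htop
  exact imp_of_negand hS hbot

/-- GL ⊆ NGL. -/
lemma gl_to_ngl {φ : Fml} (h : GLProv φ) : NGL φ := by
  induction h with
  | taut h => exact NGL.taut h
  | axK => exact NGL.axK
  | axLob => exact ngl_lob
  | mp _ _ ih1 ih2 => exact NGL.mp ih1 ih2
  | usub σ _ ih => exact NGL.usub σ ih
  | nec _ ih => exact NGL.nec ih

end GLW
namespace GLW

structure KModel where
  W : Type
  R : W → W → Prop
  V : ℕ → W → Prop

def force (M : KModel) : M.W → Fml → Prop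
  | w, .prop n => M.V n w
  | _, .top => True
  | w, .and a b => force M w a ∧ force M w b
  | w, .neg a => ¬ force M w a
  | w, .box a => ∀ v, M.R w v → force M v a

lemma force_imp {M : KModel} {w : M.W} {a b : Fml} :
    force M w (a.imp b) ↔ (force M w a → force M w b) := by
  simp only [Fml.imp, force]; tauto

lemma force_dia {M : KModel} {w : M.W} {a : Fml} :
    force M w (a.dia) ↔ ∃ v, M.R w v ∧ force M v a := by
  simp only [Fml.dia, force]; push_neg; tauto

/-- beval with the forcing-induced atom assignment agrees with forcing. -/
lemma beval_force (M : KModel) (w : M.W) (ψ : Fml) :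
    beval (fun χ => decide (force M w χ) (h := Classical.propDecidable _)) ψ = true ↔
      force M w ψ := by
  induction ψ with
  | prop n => simp [beval, force]; exact @decide_eq_true_iff _ (Classical.propDecidable _)
  | top => simp [beval, force]
  | and a b iha ihb => simp [beval, force, iha, ihb]
  | neg a iha =>
      simp only [beval, force]
      rw [← iha]
      simp
  | box a _ => simp [beval]

lemma force_subst (M : KModel) (σ : ℕ → Fml) (ψ : Fml) :
    ∀ w, force M w (fsubst σ ψ) ↔ force ⟨M.W, M.R, fun n w => force M w (σ n)⟩ w ψ := by
  induction ψ with
  | prop n => intro w; simp [fsubst, force]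
  | top => intro w; simp [fsubst, force]
  | and a b iha ihb => intro w; simp [fsubst, force, iha, ihb]
  | neg a iha => intro w; simp [fsubst, force, iha]
  | box a iha =>
      intro w; simp only [fsubst, force]
      exact forall_congr' (fun v => imp_congr Iff.rfl (iha v))

theorem gl_sound {ψ : Fml} (h : GLProv ψ) :
    ∀ M : KModel, Transitive M.R → WellFounded (fun a b : M.W => M.R b a) →
      ∀ w, force M w ψ := by
  induction h with
  | @taut φ ht =>
      intro M _ _ w
      exact (beval_force M w φ).1 (ht _)
  | axK =>
      intro M _ _ w
      simp only [axK, force_imp]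
      intro h1 h2 v hv
      exact force_imp.1 (h1 v hv) (h2 v hv)
  | axLob =>
      intro M htr hwf w
      simp only [axLob, force_imp]
      intro h1
      intro v hv
      induction v using WellFounded.induction hwf with
      | _ v ih =>
        refine force_imp.1 (h1 v hv) ?_
        intro u hu
        exact ih u hu (htr hv hu)
  | mp _ _ ih1 ih2 =>
      intro M htr hwf w
      exact force_imp.1 (ih1 M htr hwf w) (ih2 M htr hwf w)
  | @usub φ σ _ ih =>
      intro M htr hwf w
      exact (force_subst M σ φ w).2 (ih ⟨M.W, M.R, fun n w => force M w (σ n)⟩ htr hwf w)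
  | nec _ ih =>
      intro M htr hwf w
      exact fun v _ => ih M htr hwf v

end GLW
namespace GLW

def conjList : List Fml → Fml
  | [] => Fml.top
  | ψ :: l => ψ.and (conjList l)

def disjList : List Fml → Fml
  | [] => Fml.bot
  | ψ :: l => ψ.or (disjList l)

variable {S : Fml → Prop}

/-- extraction from a list conjunction. -/
lemma conj_elem (hS : Sys S) {l : List Fml} {ψ : Fml} (h : ψ ∈ l) :
    S ((conjList l).imp ψ) := by
  induction l with
  | nil => cases h
  | cons a l ih =>
      rcases List.mem_cons.1 h with h | h
      · subst h; exact and_left hS _ _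
      · exact imp_trans hS (and_right hS _ _) (ih h)

/-- introduction of a list conjunction. -/
lemma conj_intro (hS : Sys S) {a : Fml} {l : List Fml} (h : ∀ ψ ∈ l, S (a.imp ψ)) :
    S (a.imp (conjList l)) := by
  induction l with
  | nil => exact imp_top hS a
  | cons b l ih =>
      exact and_intro hS (h b (by simp)) (ih (fun ψ hψ => h ψ (by simp [hψ])))

/-- box distributes over list conjunctions. -/
lemma conj_box (hS : Sys S) (l : List Fml) :
    S ((conjList (l.map Fml.box)).imp (Fml.box (conjList l))) := by
  induction l with
  | nil => exact imp_of hS _ (hS.nec (hS.taut (fun f => rfl)))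
  | cons a l ih =>
      have h1 : S ((conjList ((a :: l).map Fml.box)).imp ((Fml.box a).and (Fml.box (conjList l)))) := by
        refine and_intro hS (and_left hS _ _) ?_
        exact imp_trans hS (and_right hS _ _) ih
      exact imp_trans hS h1 (box_and hS _ _)

lemma beval_conjList (f : Fml → Bool) (l : List Fml) :
    beval f (conjList l) = true ↔ ∀ ψ ∈ l, beval f ψ = true := by
  induction l with
  | nil => simp [conjList, beval]
  | cons a l ih => simp [conjList, beval, ih]

lemma beval_disjList_of (f : Fml → Bool) {l : List Fml} {ψ : Fml} (h : ψ ∈ l)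
    (hψ : beval f ψ = true) : beval f (disjList l) = true := by
  induction l with
  | nil => cases h
  | cons a l ih =>
      rcases List.mem_cons.1 h with h | h
      · subst h; simp [disjList, Fml.or, beval, hψ]
      · simp [disjList, Fml.or, beval, ih h]

/-- eliminate a list disjunction: if `a` implies the disjunction and each disjunct
is inconsistent with `a`, then `a` is inconsistent. -/
lemma disj_elim (hS : Sys S) {a : Fml} : ∀ {l : List Fml},
    S (a.imp (disjList l)) → (∀ d ∈ l, S ((a.and d).imp Fml.bot)) → S (a.imp Fml.bot) := by
  intro l
  induction l with
  | nil => intro h _; exact h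
  | cons d l ih =>
      intro h hd
      have t : S ((a.imp (d.or (disjList l))).imp
          (((a.and d).imp Fml.bot).imp (a.imp (disjList l)))) := hS.taut (by
        intro f; simp only [Fml.imp, Fml.or, Fml.bot, beval]
        cases beval f a <;> cases beval f d <;> cases beval f (disjList l) <;> rfl)
      have h2 : S (a.imp (disjList l)) := hS.mp (hS.mp t h) (hd d (by simp))
      exact ih h2 (fun e he => hd e (by simp [he]))

end GLW
namespace GLW

/-- subformulas -/
def sub : Fml → Finset Fml
  | .prop n => {.prop n}
  | .top => {.top}
  | .and a b => insert (.and a b) (sub a ∪ sub b)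
  | .neg a => insert (.neg a) (sub a)
  | .box a => insert (.box a) (sub a)

lemma mem_sub_self (φ : Fml) : φ ∈ sub φ := by
  cases φ <;> simp [sub]

lemma sub_trans : ∀ φ ψ : Fml, ψ ∈ sub φ → sub ψ ⊆ sub φ := by
  intro φ
  induction φ with
  | prop n => intro ψ h; simp [sub] at h; subst h; simp [sub]
  | top => intro ψ h; simp [sub] at h; subst h; simp [sub]
  | and a b iha ihb =>
      intro ψ h
      simp only [sub, Finset.mem_insert, Finset.mem_union] at h
      rcases h with h | h | h
      · subst h; exact fun x hx => hx
      · exact fun x hx => by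
          simp only [sub, Finset.mem_insert, Finset.mem_union]
          exact Or.inr (Or.inl (iha ψ h hx))
      · exact fun x hx => by
          simp only [sub, Finset.mem_insert, Finset.mem_union]
          exact Or.inr (Or.inr (ihb ψ h hx))
  | neg a iha =>
      intro ψ h
      simp only [sub, Finset.mem_insert] at h
      rcases h with h | h
      · subst h; exact fun x hx => hx
      · exact fun x hx => by
          simp only [sub, Finset.mem_insert]
          exact Or.inr (iha ψ h hx)
  | box a iha =>
      intro ψ h
      simp only [sub, Finset.mem_insert] at h
      rcases h with h | h
      · subst h; exact fun x hx => hx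
      · exact fun x hx => by
          simp only [sub, Finset.mem_insert]
          exact Or.inr (iha ψ h hx)

/-- `B` is closed under subformulas. -/
def Closed (B : Finset Fml) : Prop := ∀ χ ∈ B, sub χ ⊆ B

lemma closed_sub (φ : Fml) : Closed (sub φ) := fun χ hχ => sub_trans φ χ hχ

lemma Closed.and {B : Finset Fml} (h : Closed B) {a b : Fml} (hab : a.and b ∈ B) :
    a ∈ B ∧ b ∈ B := by
  constructor
  · exact h _ hab (by simp [sub, mem_sub_self])
  · exact h _ hab (by simp [sub, mem_sub_self])

lemma Closed.neg {B : Finset Fml} (h : Closed B) {a : Fml} (ha : a.neg ∈ B) : a ∈ B :=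
  h _ ha (by simp [sub, mem_sub_self])

lemma Closed.box {B : Finset Fml} (h : Closed B) {a : Fml} (ha : a.box ∈ B) : a ∈ B :=
  h _ ha (by simp [sub, mem_sub_self])

/-- a signed literal. -/
def sgn (b : Bool) (χ : Fml) : Fml := if b then χ else χ.neg

lemma beval_sgn (f : Fml → Bool) (b : Bool) (χ : Fml) :
    beval f (sgn b χ) = true ↔ beval f χ = b := by
  cases b <;> simp [sgn, beval]

/-- the characteristic conjunction of a world `t` over `B`. -/
noncomputable def wconj (B : Finset Fml) (t : Fml → Bool) : Fml :=
  conjList (B.toList.map (fun χ => sgn (t χ) χ))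

/-- consistency of a world. -/
def Con (B : Finset Fml) (t : Fml → Bool) : Prop :=
  ¬ GLProv ((wconj B t).imp Fml.bot)

lemma beval_wconj (B : Finset Fml) (t : Fml → Bool) (f : Fml → Bool) :
    beval f (wconj B t) = true ↔ ∀ χ ∈ B, beval f χ = t χ := by
  rw [wconj, beval_conjList]
  constructor
  · intro h χ hχ
    exact (beval_sgn f (t χ) χ).1 (h _ (List.mem_map.2 ⟨χ, Finset.mem_toList.2 hχ, rfl⟩))
  · intro h ψ hψ
    rcases List.mem_map.1 hψ with ⟨χ, hχ, rfl⟩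
    exact (beval_sgn f (t χ) χ).2 (h χ (Finset.mem_toList.1 hχ))

/-- literal extraction from a consistent world's conjunction. -/
lemma wconj_elem {B : Finset Fml} (t : Fml → Bool) {χ : Fml} (hχ : χ ∈ B) :
    GLProv ((wconj B t).imp (sgn (t χ) χ)) :=
  conj_elem sysGL (List.mem_map.2 ⟨χ, Finset.mem_toList.2 hχ, rfl⟩)

lemma wconj_elem_true {B : Finset Fml} {t : Fml → Bool} {χ : Fml} (hχ : χ ∈ B)
    (ht : t χ = true) : GLProv ((wconj B t).imp χ) := by
  have := wconj_elem t hχ; rwa [ht, sgn, if_pos rfl] at this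

lemma wconj_elem_false {B : Finset Fml} {t : Fml → Bool} {χ : Fml} (hχ : χ ∈ B)
    (ht : t χ = false) : GLProv ((wconj B t).imp χ.neg) := by
  have := wconj_elem t hχ; rwa [ht, sgn, if_neg (by simp)] at this

/-- a consistent world is boolean-satisfiable. -/
lemma Con.sat {B : Finset Fml} {t : Fml → Bool} (h : Con B t) :
    ∃ f, ∀ χ ∈ B, beval f χ = t χ := by
  by_contra hc
  push_neg at hc
  refine h (GLProv.taut ?_)
  intro f
  rcases hc f with ⟨χ, hχ, hne⟩
  simp only [Fml.imp, Fml.bot, beval]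
  cases hb : beval f (wconj B t) with
  | false => rfl
  | true => exact absurd ((beval_wconj B t f).1 hb _ hχ) hne

end GLW
namespace GLW

variable {B : Finset Fml} {t : Fml → Bool}

lemma Con.top (h : Con B t) (hm : Fml.top ∈ B) : t Fml.top = true := by
  rcases h.sat with ⟨f, hf⟩
  have := hf _ hm
  simpa [beval] using this.symm

lemma Con.and_coh (h : Con B t) {a b : Fml} (hm : a.and b ∈ B) (ha : a ∈ B) (hb : b ∈ B) :
    t (a.and b) = (t a && t b) := by
  rcases h.sat with ⟨f, hf⟩
  rw [← hf _ hm, ← hf _ ha, ← hf _ hb]; rfl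

lemma Con.neg_coh (h : Con B t) {a : Fml} (hm : a.neg ∈ B) (ha : a ∈ B) :
    t a.neg = !(t a) := by
  rcases h.sat with ⟨f, hf⟩
  rw [← hf _ hm, ← hf _ ha]; rfl

/-- the conjunction of a signed-constraint list. -/
noncomputable def cconj (c : List (Fml × Bool)) : Fml :=
  conjList (c.map (fun p => sgn p.2 p.1))

lemma beval_cconj (f : Fml → Bool) (c : List (Fml × Bool)) :
    beval f (cconj c) = true ↔ ∀ p ∈ c, beval f p.1 = p.2 := by
  rw [cconj, beval_conjList]
  constructor
  · intro h p hp
    exact (beval_sgn f p.2 p.1).1 (h _ (List.mem_map.2 ⟨p, hp, rfl⟩))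
  · intro h ψ hψ
    rcases List.mem_map.1 hψ with ⟨p, hp, rfl⟩
    exact (beval_sgn f p.2 p.1).2 (h p hp)

/-- extend a `B`-indexed assignment to all formulas. -/
noncomputable def extAsg (B : Finset Fml) (g : {x // x ∈ B} → Bool) : Fml → Bool :=
  fun χ => if h : χ ∈ B then g ⟨χ, h⟩ else false

/-- Lindenbaum: any consistent finite constraint list over `B` extends to a
consistent world. -/
lemma lindenbaum (B : Finset Fml) (c : List (Fml × Bool)) (hc : ∀ p ∈ c, p.1 ∈ B)
    (hcon : ¬ GLProv ((cconj c).imp Fml.bot)) :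
    ∃ t : Fml → Bool, Con B t ∧ ∀ p ∈ c, t p.1 = p.2 := by
  by_contra hno
  push_neg at hno
  set glist : List ({x // x ∈ B} → Bool) := (Finset.univ : Finset ({x // x ∈ B} → Bool)).toList
    with hglist
  -- the constraint conjunction implies the disjunction of all total worlds
  have h1 : GLProv ((cconj c).imp (disjList (glist.map (fun g => wconj B (extAsg B g))))) := by
    refine GLProv.taut ?_
    intro f
    simp only [Fml.imp, Fml.bot, beval]
    cases hA : beval f (cconj c) with
    | false => rfl
    | true =>
        have hg : beval f (wconj B (extAsg B (fun x => beval f x.1))) = true := by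
          rw [beval_wconj]
          intro χ hχ
          simp [extAsg, hχ]
        have hmem : wconj B (extAsg B (fun x => beval f x.1)) ∈
            glist.map (fun g => wconj B (extAsg B g)) :=
          List.mem_map.2 ⟨_, by simp [hglist], rfl⟩
        rw [beval_disjList_of f hmem hg]
        rfl
  -- each disjunct is jointly inconsistent with the constraints
  have h2 : ∀ d ∈ glist.map (fun g => wconj B (extAsg B g)),
      GLProv (((cconj c).and d).imp Fml.bot) := by
    intro d hd
    rcases List.mem_map.1 hd with ⟨g, _, rfl⟩
    by_cases hext : ∀ p ∈ c, extAsg B g p.1 = p.2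
    · -- then the extension must be inconsistent
      have hbad : ¬ Con B (extAsg B g) := by
        intro hcon'
        rcases hno (extAsg B g) hcon' with ⟨p, hp, hne⟩
        exact hne (hext p hp)
      rw [Con, not_not] at hbad
      exact imp_trans sysGL (and_right sysGL _ _) hbad
    · -- conflicting literal: propositional contradiction
      push_neg at hext
      rcases hext with ⟨p, hp, hne⟩
      refine GLProv.taut ?_
      intro f
      simp only [Fml.imp, Fml.bot, beval]
      cases hA : beval f (cconj c) with
      | false => rfl
      | true =>
          cases hG : beval f (wconj B (extAsg B g)) with
          | false => simp
          | true =>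
              exfalso
              have e1 : beval f p.1 = p.2 := (beval_cconj f c).1 hA p hp
              have e2 : beval f p.1 = extAsg B g p.1 :=
                (beval_wconj B _ f).1 hG p.1 (hc p hp)
              exact hne (e2 ▸ e1)
  exact hcon (disj_elim sysGL h1 h2)

end GLW
namespace GLW

def isBoxb : Fml → Bool
  | .box _ => true
  | _ => false

def unbox : Fml → Fml
  | .box a => a
  | x => x

/-- accessibility between worlds over `B`. -/
structure Rel (B : Finset Fml) (t s : Fml → Bool) : Prop where
  mono : ∀ χ : Fml, χ.box ∈ B → t χ.box = true → s χ.box = true ∧ s χ = true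
  new : ∃ χ : Fml, χ.box ∈ B ∧ t χ.box = false ∧ s χ.box = true

/-- number of boxed `B`-formulas true at a world. -/
noncomputable def mW (B : Finset Fml) (t : Fml → Bool) : ℕ :=
  (B.filter (fun χ => isBoxb χ && t χ)).card

lemma mW_le (B : Finset Fml) (t : Fml → Bool) : mW B t ≤ B.card :=
  Finset.card_filter_le _ _

lemma Rel.mW_lt {B : Finset Fml} {t s : Fml → Bool} (h : Rel B t s) : mW B t < mW B s := by
  apply Finset.card_lt_card
  rw [Finset.ssubset_iff_of_subset]
  · rcases h.new with ⟨χ, hχB, htf, hst⟩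
    refine ⟨χ.box, ?_, ?_⟩
    · simp [Finset.mem_filter, hχB, isBoxb, hst]
    · simp [Finset.mem_filter, hχB, isBoxb, htf]
  · intro x hx
    simp only [Finset.mem_filter, Bool.and_eq_true] at hx ⊢
    obtain ⟨hxB, hbox, hxt⟩ := hx
    cases x with
    | box a => exact ⟨hxB, hbox, (h.mono a hxB hxt).1⟩
    | prop n => simp [isBoxb] at hbox
    | top => simp [isBoxb] at hbox
    | and a b => simp [isBoxb] at hbox
    | neg a => simp [isBoxb] at hbox

lemma Rel.trans {B : Finset Fml} {t s u : Fml → Bool}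
    (h1 : Rel B t s) (h2 : Rel B s u) : Rel B t u := by
  constructor
  · intro χ hχ ht
    have := h1.mono χ hχ ht
    exact h2.mono χ hχ this.1
  · rcases h1.new with ⟨χ, hχ, htf, hst⟩
    exact ⟨χ, hχ, htf, (h2.mono χ hχ hst).1⟩

/-- the canonical model over `B`. -/
noncomputable def Mod (B : Finset Fml) : KModel where
  W := {t : Fml → Bool // Con B t}
  R := fun t s => Rel B t.1 s.1
  V := fun n t => t.1 (.prop n) = true

lemma mod_trans (B : Finset Fml) : Transitive (Mod B).R := by
  intro a b c h1 h2
  exact Rel.trans h1 h2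

lemma mod_wf (B : Finset Fml) : WellFounded (fun a b : (Mod B).W => (Mod B).R b a) := by
  have hwf : WellFounded (InvImage (· < ·) (fun t : (Mod B).W => B.card - mW B t.1)) :=
    InvImage.wf _ Nat.lt_wfRel.wf
  refine Subrelation.wf ?_ hwf
  intro a b hab
  have h1 : mW B b.1 < mW B a.1 := Rel.mW_lt hab
  have h2 : mW B a.1 ≤ B.card := mW_le B a.1
  simp only [InvImage]
  omega

/-- `((a ∧ (b ∧ ¬c)) ⊃ ⊥) ⊃ (a ⊃ (b ⊃ c))`. -/
lemma imp2_of_negand {S : Fml → Prop} (hS : Sys S) {a b c : Fml}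
    (h : S ((a.and (b.and c.neg)).imp Fml.bot)) : S (a.imp (b.imp c)) := by
  have t : S (((a.and (b.and c.neg)).imp Fml.bot).imp (a.imp (b.imp c))) := hS.taut (by
    intro f; simp only [Fml.imp, Fml.bot, beval]
    cases beval f a <;> cases beval f b <;> cases beval f c <;> rfl)
  exact hS.mp t h

lemma gl_four_inst (a : Fml) : GLProv ((Fml.box a).imp (Fml.box (Fml.box a))) := by
  have := GLProv.usub (fun _ => a) gl_four
  simpa [axFour, fsubst, Fml.imp] using this

end GLW
namespace GLW

lemma sgn_true (χ : Fml) : sgn true χ = χ := rfl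
lemma sgn_false (χ : Fml) : sgn false χ = χ.neg := rfl

lemma existence (B : Finset Fml) (hB : Closed B) {t : Fml → Bool} (hcon : Con B t)
    {ψ : Fml} (hψ : ψ.box ∈ B) (hf : t ψ.box = false) :
    ∃ s, Con B s ∧ Rel B t s ∧ s ψ = false := by
  classical
  set bl : List Fml := B.toList.filter (fun χ => isBoxb χ && t χ) with hbl
  have bl_spec : ∀ χ ∈ bl, χ ∈ B ∧ t χ = true ∧ ∃ χ', χ = Fml.box χ' := by
    intro χ hχ
    rw [hbl, List.mem_filter] at hχ
    obtain ⟨h1, h2⟩ := hχ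
    simp only [Bool.and_eq_true] at h2
    refine ⟨Finset.mem_toList.1 h1, h2.2, ?_⟩
    cases χ with
    | box a => exact ⟨a, rfl⟩
    | prop n => simp [isBoxb] at h2
    | top => simp [isBoxb] at h2
    | and a b => simp [isBoxb] at h2
    | neg a => simp [isBoxb] at h2
  have bl_mem : ∀ χ' : Fml, Fml.box χ' ∈ B → t (Fml.box χ') = true → Fml.box χ' ∈ bl := by
    intro χ' h1 h2
    rw [hbl, List.mem_filter]
    simp [Finset.mem_toList.2 h1, isBoxb, h2]
  set c : List (Fml × Bool) :=
    (bl.map (fun χ => (χ, true))) ++ (bl.map (fun χ => (unbox χ, true)))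
      ++ [(ψ.box, true), (ψ, false)] with hc
  have hmem_c : ∀ χ ∈ bl, (χ, true) ∈ c ∧ (unbox χ, true) ∈ c := by
    intro χ hχ
    rw [hc]
    simp only [List.mem_append, List.mem_map]
    exact ⟨Or.inl (Or.inl ⟨χ, hχ, rfl⟩), Or.inl (Or.inr ⟨χ, hχ, rfl⟩)⟩
  have hmem_last : (ψ.box, true) ∈ c ∧ (ψ, false) ∈ c := by
    rw [hc]; constructor <;> simp
  -- all constraint formulas are in B
  have hce : ∀ p ∈ c, p.1 ∈ B := by
    intro p hp
    rw [hc] at hp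
    simp only [List.mem_append, List.mem_map, List.mem_cons, List.mem_singleton] at hp
    rcases hp with (⟨χ, hχ, rfl⟩ | ⟨χ, hχ, rfl⟩) | hp | hp | hfalse
    · exact (bl_spec χ hχ).1
    · obtain ⟨hχB, _, χ', rfl⟩ := bl_spec χ hχ
      exact hB.box hχB
    · subst hp; exact hψ
    · subst hp; exact hB.box hψ
    · cases hfalse
  -- consistency of the constraints, via Löb
  have hccon : ¬ GLProv ((cconj c).imp Fml.bot) := by
    intro hbad
    set A : Fml := conjList ((bl.map unbox) ++ bl) with hA
    set X : Fml := A.and ((Fml.box ψ).and ψ.neg) with hX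
    have h1 : GLProv (X.imp (cconj c)) := by
      rw [cconj]
      refine conj_intro sysGL ?_
      intro e he
      rcases List.mem_map.1 he with ⟨p, hp, rfl⟩
      rw [hc] at hp
      simp only [List.mem_append, List.mem_map, List.mem_cons, List.mem_singleton] at hp
      rcases hp with (⟨χ, hχ, rfl⟩ | ⟨χ, hχ, rfl⟩) | hp | hp | hfalse
      · rw [sgn_true]
        refine imp_trans sysGL (and_left sysGL _ _) (conj_elem sysGL ?_)
        exact List.mem_append.2 (Or.inr hχ)
      · rw [sgn_true]
        refine imp_trans sysGL (and_left sysGL _ _) (conj_elem sysGL ?_)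
        exact List.mem_append.2 (Or.inl (List.mem_map.2 ⟨χ, hχ, rfl⟩))
      · subst hp; rw [sgn_true]
        exact imp_trans sysGL (and_right sysGL _ _) (and_left sysGL _ _)
      · subst hp; rw [sgn_false]
        exact imp_trans sysGL (and_right sysGL _ _) (and_right sysGL _ _)
      · cases hfalse
    have h2 : GLProv (X.imp Fml.bot) := imp_trans sysGL h1 hbad
    have h3 : GLProv (A.imp ((Fml.box ψ).imp ψ)) := imp2_of_negand sysGL h2
    have h4 : GLProv ((Fml.box A).imp (Fml.box ψ)) :=
      imp_trans sysGL (kd sysGL h3) (gl_lob ψ)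
    have h5 : GLProv ((wconj B t).imp (Fml.box A)) := by
      refine imp_trans sysGL ?_ (conj_box sysGL ((bl.map unbox) ++ bl))
      refine conj_intro sysGL ?_
      intro e he
      rcases List.mem_map.1 he with ⟨x, hx, rfl⟩
      rcases List.mem_append.1 hx with hx | hx
      · rcases List.mem_map.1 hx with ⟨χ, hχ, rfl⟩
        obtain ⟨hχB, hχt, χ', rfl⟩ := bl_spec χ hχ
        show GLProv ((wconj B t).imp (Fml.box (unbox (Fml.box χ'))))
        rw [show unbox (Fml.box χ') = χ' from rfl]
        exact wconj_elem_true hχB hχt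
      · obtain ⟨hχB, hχt, χ', rfl⟩ := bl_spec x hx
        exact imp_trans sysGL (wconj_elem_true hχB hχt) (gl_four_inst χ')
    have h6 : GLProv ((wconj B t).imp (Fml.box ψ)) := imp_trans sysGL h5 h4
    have h7 : GLProv ((wconj B t).imp (Fml.box ψ).neg) := wconj_elem_false hψ hf
    exact hcon (imp_absurd sysGL h6 h7)
  -- Lindenbaum
  rcases lindenbaum B c hce hccon with ⟨s, hscon, hs⟩
  refine ⟨s, hscon, ?_, hs (ψ, false) hmem_last.2⟩
  constructor
  · intro χ hχB hχt
    have hχbl : Fml.box χ ∈ bl := bl_mem χ hχB hχt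
    have h1 : s (Fml.box χ) = true := hs _ (hmem_c _ hχbl).1
    have h2 : s (unbox (Fml.box χ)) = true := hs _ (hmem_c _ hχbl).2
    exact ⟨h1, h2⟩
  · exact ⟨ψ, hψ, hf, hs _ hmem_last.1⟩

end GLW
namespace GLW

lemma truth (B : Finset Fml) (hB : Closed B) :
    ∀ ψ, ψ ∈ B → ∀ t : (Mod B).W, (force (Mod B) t ψ ↔ t.1 ψ = true) := by
  intro ψ
  induction ψ with
  | prop n => intro _ t; simp [force, Mod]
  | top => intro h t; simp [force, t.2.top h]
  | and a b iha ihb =>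
      intro h t
      obtain ⟨ha, hb⟩ := hB.and h
      simp only [force]
      rw [t.2.and_coh h ha hb, iha ha t, ihb hb t, Bool.and_eq_true]
  | neg a iha =>
      intro h t
      have ha := hB.neg h
      simp only [force]
      rw [t.2.neg_coh h ha, iha ha t]
      simp
  | box a iha =>
      intro h t
      have ha := hB.box h
      constructor
      · intro hforce
        by_contra hne
        have hfalse : t.1 a.box = false := by revert hne; cases t.1 a.box <;> simp
        rcases existence B hB t.2 h hfalse with ⟨s, hscon, hrel, hsa⟩
        have hfs : force (Mod B) ⟨s, hscon⟩ a := hforce ⟨s, hscon⟩ hrel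
        rw [iha ha ⟨s, hscon⟩] at hfs
        exact absurd (show s a = true from hfs) (by simp [hsa])
      · intro htrue s hrel
        rw [iha ha s]
        exact (hrel.mono a h htrue).2

lemma nc_closed {φ : Fml} (h : ∀ n, GLProv (φ.imp (Fml.dian n Fml.top))) :
    GLProv (φ.imp Fml.bot) := by
  by_contra hnc
  set B := sub φ with hBdef
  have hB : Closed B := closed_sub φ
  have hccon : ¬ GLProv ((cconj [(φ, true)]).imp Fml.bot) := by
    intro hbad
    refine hnc (imp_trans sysGL ?_ hbad)
    show GLProv (φ.imp (conjList [sgn true φ]))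
    rw [sgn_true]
    exact and_intro sysGL (imp_self sysGL φ) (imp_top sysGL φ)
  have hmemφ : φ ∈ B := hBdef ▸ mem_sub_self φ
  rcases lindenbaum B [(φ, true)] (by simpa using hmemφ) hccon with ⟨t, hcon, ht⟩
  have htφ : t φ = true := ht (φ, true) (by simp)
  have hw : force (Mod B) ⟨t, hcon⟩ φ := (truth B hB φ hmemφ ⟨t, hcon⟩).2 htφ
  have hdepth : ∀ n (w : (Mod B).W), force (Mod B) w (Fml.dian n Fml.top) →
      n + mW B w.1 ≤ B.card := by
    intro n
    induction n with
    | zero => intro w _; simpa using mW_le B w.1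
    | succ n ih =>
        intro w hforce
        rw [Fml.dian] at hforce
        rcases force_dia.1 hforce with ⟨v, hrel, hv⟩
        have h1 := ih v hv
        have h2 : mW B w.1 < mW B v.1 := Rel.mW_lt hrel
        omega
  have hall : force (Mod B) ⟨t, hcon⟩ (Fml.dian (B.card + 1) Fml.top) :=
    force_imp.1 (gl_sound (h (B.card + 1)) (Mod B) (mod_trans B) (mod_wf B) _) hw
  have hfin := hdepth (B.card + 1) ⟨t, hcon⟩ hall
  omega

/-- NGL ⊆ GL. -/
lemma ngl_to_gl {φ : Fml} (h : NGL φ) : GLProv φ := by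
  induction h with
  | taut h => exact GLProv.taut h
  | axK => exact GLProv.axK
  | ax4 => exact gl_four
  | mp _ _ ih1 ih2 => exact GLProv.mp ih1 ih2
  | usub σ _ ih => exact GLProv.usub σ ih
  | nec _ ih => exact GLProv.nec ih
  | nc _ ih => exact nc_closed ih

end GLW

theorem stmt6 (φ : Fml) : GLProv φ ↔ NGL φ :=
  ⟨GLW.gl_to_ngl, GLW.ngl_to_gl⟩
end

section
/- Let A be a modal algebra such that □x ≤ □□x holds for every x ∈ A. Then for every x ∈ A and every n ∈ ω, □(□x ⇨ x) ⊓ ¬□x ≤ ◇ⁿ⊤, where a ⇨ b denotes the Boolean implication ¬a ⊔ b. -/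
theorem stmt7 {A : Type} [BooleanAlgebra A] (box : A → A)
    (hbox_top : box ⊤ = ⊤) (hbox_inf : ∀ x y : A, box (x ⊓ y) = box x ⊓ box y)
    (htrans : ∀ x : A, box x ≤ box (box x)) (x : A) (n : ℕ) :
    box (box x ⇨ x) ⊓ (box x)ᶜ ≤ dianA box n := by
  have hmono : ∀ a b : A, a ≤ b → box a ≤ box b := by
    intro a b h
    have : a ⊓ b = a := inf_eq_left.mpr h
    calc box a = box (a ⊓ b) := by rw [this]
      _ = box a ⊓ box b := hbox_inf a b
      _ ≤ box b := inf_le_right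
  have hdiamono : ∀ a b : A, a ≤ b → diaA box a ≤ diaA box b := by
    intro a b h
    exact compl_le_compl (hmono _ _ (compl_le_compl h))
  set L : A := box (box x ⇨ x) ⊓ (box x)ᶜ with hL
  -- key step: L ≤ ◇L
  have hstep1 : Lᶜ ⊓ box (box x ⇨ x) ≤ box x := by
    rw [hL, compl_inf, compl_compl]
    calc ((box (box x ⇨ x))ᶜ ⊔ box x) ⊓ box (box x ⇨ x)
        ≤ ((box (box x ⇨ x))ᶜ ⊓ box (box x ⇨ x)) ⊔ box x := by
          rw [inf_sup_right]
          exact sup_le_sup_left inf_le_left _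
      _ = box x := by rw [compl_inf_eq_bot, bot_sup_eq]
  have hstep2 : box Lᶜ ⊓ box (box (box x ⇨ x)) ≤ box (box x) := by
    rw [← hbox_inf]
    exact hmono _ _ hstep1
  have hstep3 : box (box x) ⊓ box (box x ⇨ x) ≤ box x := by
    rw [← hbox_inf]
    exact hmono _ _ inf_himp_le
  have hkey : L ≤ diaA box L := by
    rw [diaA, le_compl_iff_disjoint_right, disjoint_iff_inf_le]
    have h1 : L ⊓ box Lᶜ ≤ box (box x) := by
      calc L ⊓ box Lᶜ ≤ (box (box x ⇨ x) ⊓ box Lᶜ) :=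
            inf_le_inf_right _ inf_le_left
        _ ≤ box (box (box x ⇨ x)) ⊓ box Lᶜ :=
            inf_le_inf_right _ (htrans _)
        _ = box Lᶜ ⊓ box (box (box x ⇨ x)) := inf_comm _ _
        _ ≤ box (box x) := hstep2
      -- still need ⊓ box (box x ⇨ x) : redo
    have h2 : L ⊓ box Lᶜ ≤ box (box x) ⊓ box (box x ⇨ x) := by
      exact le_inf h1 (le_trans inf_le_left inf_le_left)
    have h3 : L ⊓ box Lᶜ ≤ box x := le_trans h2 hstep3
    have h4 : L ⊓ box Lᶜ ≤ (box x)ᶜ := le_trans inf_le_left inf_le_right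
    calc L ⊓ box Lᶜ ≤ box x ⊓ (box x)ᶜ := le_inf h3 h4
      _ = ⊥ := inf_compl_eq_bot
  induction n with
  | zero => exact le_top
  | succ n ih =>
    calc L ≤ diaA box L := hkey
      _ ≤ diaA box (dianA box n) := hdiamono _ _ ih
      _ = dianA box (n + 1) := rfl
end

section
/- Let F be the Kripke frame (ω+1, >). Then the non-compactness rule is true at the modal algebra Alg(F): for every modal formula φ, if for every n ∈ ω and every valuation v : Prop → P(ω+1) the truth set of φ⊃◇ⁿ⊤ in the model (ω+1, >, v) is all of ω+1, then for every valuation v the truth set of φ⊃⊥ in (ω+1, >, v) is all of ω+1. -/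
/-- The accessibility relation of the frame `(ω+1, >)`. -/
def Rgt (w w' : ℕ∞) : Prop := w' < w

/-- list of subformulas -/
def subf : Fml → List Fml
  | .prop n => [.prop n]
  | .top => [.top]
  | .and a b => .and a b :: (subf a ++ subf b)
  | .neg a => .neg a :: subf a
  | .box a => .box a :: subf a

lemma self_mem_subf (ψ : Fml) : ψ ∈ subf ψ := by
  cases ψ <;> simp [subf]

/-- truth only depends on valuation at worlds ≤ w -/
lemma truth_congr (v v' : ℕ → Set ℕ∞) (ψ : Fml) :
    ∀ w : ℕ∞, (∀ p, ∀ x ≤ w, (x ∈ v p ↔ x ∈ v' p)) →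
      (Truth Rgt v ψ w ↔ Truth Rgt v' ψ w) := by
  induction ψ with
  | prop n => intro w hw; exact hw n w le_rfl
  | top => intro w hw; simp [Truth]
  | and a b iha ihb =>
      intro w hw
      simp only [Truth]
      exact and_congr (iha w hw) (ihb w hw)
  | neg a iha => intro w hw; simp only [Truth]; exact not_congr (iha w hw)
  | box a iha =>
      intro w hw
      simp only [Truth]
      refine forall_congr' fun w' => imp_congr_right fun hr => ?_
      exact iha w' fun p x hx => hw p x (hx.trans (le_of_lt hr))

lemma le_of_dian (v : ℕ → Set ℕ∞) : ∀ (n : ℕ) (w : ℕ∞),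
    Truth Rgt v (Fml.dian n Fml.top) w → (n : ℕ∞) ≤ w := by
  intro n
  induction n with
  | zero => intro w _; simp
  | succ n ih =>
      intro w hw
      have : ¬ ∀ w', Rgt w w' → ¬ Truth Rgt v (Fml.dian n Fml.top) w' := hw
      push_neg at this
      obtain ⟨w', hr, hw'⟩ := this
      have h1 : (n : ℕ∞) ≤ w' := ih w' hw'
      have h2 : (n : ℕ∞) < w := lt_of_le_of_lt h1 hr
      have : ((n : ℕ∞) + 1) ≤ w := Order.add_one_le_of_lt h2
      simpa [Nat.cast_add] using this

theorem stmt11 (φ : Fml)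
    (h : ∀ (n : ℕ) (v : ℕ → Set ℕ∞) (w : ℕ∞),
      Truth Rgt v (Fml.imp φ (Fml.dian n Fml.top)) w) :
    ∀ (v : ℕ → Set ℕ∞) (w : ℕ∞), Truth Rgt v (Fml.imp φ Fml.bot) w := by
  classical
  -- Step 1: φ can be true only at ⊤
  have htop : ∀ (v : ℕ → Set ℕ∞) (w : ℕ∞), Truth Rgt v φ w → w = ⊤ := by
    intro v w hw
    by_contra hne
    obtain ⟨m, rfl⟩ := WithTop.ne_top_iff_exists.1 hne
    have himp := h (m + 1) v (m : ℕ∞)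
    have hd : Truth Rgt v (Fml.dian (m + 1) Fml.top) (m : ℕ∞) := by
      by_contra hc
      exact himp ⟨hw, hc⟩
    have hle : ((m + 1 : ℕ) : ℕ∞) ≤ (m : ℕ∞) := le_of_dian v (m + 1) (m : ℕ∞) hd
    have : m + 1 ≤ m := by exact_mod_cast hle
    omega
  -- Step 2: φ is not true at ⊤ under any valuation
  have hnot : ∀ (v : ℕ → Set ℕ∞), ¬ Truth Rgt v φ ⊤ := by
    intro v hv
    -- types of finite worlds
    set t : ℕ → Finset Fml := fun u =>
      (subf φ).toFinset.filter (fun χ => Truth Rgt v χ (u : ℕ∞)) with ht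
    have hfin : (Set.range t).Finite :=
      Set.Finite.subset ((subf φ).toFinset.powerset.finite_toSet)
        (by
          rintro _ ⟨u, rfl⟩
          simp only [Finset.coe_powerset, Set.mem_preimage, Set.mem_powerset_iff,
            Finset.coe_subset]
          exact Finset.filter_subset _ _)
    -- a bound M below which all types are realized
    obtain ⟨M, hM⟩ : ∃ M : ℕ, ∀ u : ℕ, ∃ k : ℕ, k < M ∧ t k = t u := by
      refine ⟨(hfin.toFinset.sup fun s =>
        (if hs : ∃ u, t u = s then hs.choose else 0) + 1), fun u => ?_⟩
      have hs : ∃ u', t u' = t u := ⟨u, rfl⟩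
      refine ⟨hs.choose, ?_, hs.choose_spec⟩
      have hmem : t u ∈ hfin.toFinset := hfin.mem_toFinset.2 ⟨u, rfl⟩
      have := Finset.le_sup (f := fun s => (if hs : ∃ u', t u' = s then hs.choose else 0) + 1) hmem
      simp only [dif_pos hs] at this
      omega
    -- modified valuation: worlds ≥ M behave like ⊤
    set v' : ℕ → Set ℕ∞ := fun p => {x | if x < (M : ℕ∞) then x ∈ v p else ⊤ ∈ v p} with hv'
    -- below M, v' agrees with v
    have hagree : ∀ (k : ℕ), k < M → ∀ p, ∀ x ≤ (k : ℕ∞), (x ∈ v p ↔ x ∈ v' p) := by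
      intro k hk p x hx
      have : x < (M : ℕ∞) := lt_of_le_of_lt hx (by exact_mod_cast hk)
      simp [hv', this]
    -- simulation: truth at world M under v' matches truth at ⊤ under v
    have hB : ∀ ψ : Fml, (∀ χ ∈ subf ψ, χ ∈ subf φ) →
        (Truth Rgt v' ψ (M : ℕ∞) ↔ Truth Rgt v ψ ⊤) := by
      intro ψ
      induction ψ with
      | prop n =>
          intro _
          show (M : ℕ∞) ∈ v' n ↔ ⊤ ∈ v n
          simp [hv']
      | top => intro _; simp [Truth]
      | and a b iha ihb =>
          intro hsub
          have ha : ∀ χ ∈ subf a, χ ∈ subf φ := fun χ hχ => hsub χ (by simp [subf, hχ])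
          have hb : ∀ χ ∈ subf b, χ ∈ subf φ := fun χ hχ => hsub χ (by simp [subf, hχ])
          simp only [Truth]
          exact and_congr (iha ha) (ihb hb)
      | neg a iha =>
          intro hsub
          have ha : ∀ χ ∈ subf a, χ ∈ subf φ := fun χ hχ => hsub χ (by simp [subf, hχ])
          simp only [Truth]
          exact not_congr (iha ha)
      | box a iha =>
          intro hsub
          have haφ : a ∈ subf φ := hsub a (by simp [subf, self_mem_subf])
          -- truth of a at a finite world k is the same under v and v'
          have hka : ∀ k : ℕ, k < M → (Truth Rgt v' a (k : ℕ∞) ↔ Truth Rgt v a (k : ℕ∞)) :=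
            fun k hk => (truth_congr v v' a (k : ℕ∞) (hagree k hk)).symm
          constructor
          · intro hbox u hu
            -- u < ⊤, so u is finite
            have hune : u ≠ ⊤ := ne_top_of_lt hu
            obtain ⟨m, rfl⟩ := WithTop.ne_top_iff_exists.1 hune
            obtain ⟨k, hk, hts⟩ := hM m
            have hak : Truth Rgt v' a (k : ℕ∞) := hbox (k : ℕ∞) (Nat.cast_lt.2 hk)
            have hak' : Truth Rgt v a (k : ℕ∞) := (hka k hk).1 hak
            have hmem : a ∈ t k := Finset.mem_filter.2 ⟨List.mem_toFinset.2 haφ, hak'⟩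
            have hmem' : a ∈ t m := hts ▸ hmem
            exact (Finset.mem_filter.1 hmem').2
          · intro hbox w' hw'
            have hne : w' ≠ ⊤ := ne_top_of_lt (lt_of_lt_of_le hw' le_top)
            obtain ⟨k, rfl⟩ := WithTop.ne_top_iff_exists.1 hne
            have hk : k < M := Nat.cast_lt.1 hw' 
            exact (hka k hk).2 (hbox (k : ℕ∞) (WithTop.coe_lt_top k))
    have hMφ : Truth Rgt v' φ (M : ℕ∞) := (hB φ (fun χ hχ => hχ)).2 hv
    have := htop v' (M : ℕ∞) hMφ
    exact absurd this (by simp)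
  -- conclude
  intro v w
  show ¬ (Truth Rgt v φ w ∧ ¬ Truth Rgt v Fml.bot w)
  rintro ⟨h1, -⟩
  have hw := htop v w h1
  subst hw
  exact hnot v h1
end

section
/- Let φ be the modal formula □(p∧□p⊃q)∨□(q∧□q⊃p) for distinct propositional variables p, q. Then for any Kripke frame (W,R) and any x ∈ W: φ is true at x under every valuation v : Prop → P(W) if and only if for all y, z ∈ W with (x,y) ∈ R, (x,z) ∈ R and y ≠ z, one has (y,z) ∈ R or (z,y) ∈ R. -/
/-- The formula `□(p ∧ □p ⊃ q) ∨ □(q ∧ □q ⊃ p)` with `p = prop 0`, `q = prop 1`. -/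
def fml14 : Fml :=
  Fml.or
    (Fml.box (Fml.imp (Fml.and (Fml.prop 0) (Fml.box (Fml.prop 0))) (Fml.prop 1)))
    (Fml.box (Fml.imp (Fml.and (Fml.prop 1) (Fml.box (Fml.prop 1))) (Fml.prop 0)))

theorem stmt14 {W : Type} [Nonempty W] (R : W → W → Prop) (x : W) :
    (∀ v : ℕ → Set W, Truth R v fml14 x) ↔
      (∀ y z : W, R x y → R x z → y ≠ z → R y z ∨ R z y) := by
  constructor
  · intro h y z hxy hxz hyz
    by_contra hc
    push_neg at hc
    set v : ℕ → Set W := fun n => if n = 0 then {w | w ≠ z} else {w | w ≠ y} with hv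
    have H := h v
    simp only [fml14, Fml.or, Fml.imp, Truth] at H
    apply H
    constructor
    · intro hA
      have h1 := hA y hxy
      apply h1
      refine ⟨⟨?_, ?_⟩, ?_⟩
      · show y ∈ v 0
        simp [hv, hyz]
      · intro w hyw
        show w ∈ v 0
        simp only [hv, if_pos rfl, Set.mem_setOf_eq]
        rintro rfl
        exact hc.1 hyw
      · show ¬ y ∈ v 1
        simp [hv]
    · intro hB
      have h1 := hB z hxz
      apply h1
      refine ⟨⟨?_, ?_⟩, ?_⟩
      · show z ∈ v 1
        simp [hv, Ne.symm hyz]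
      · intro w hzw
        show w ∈ v 1
        simp only [hv, Set.mem_setOf_eq]
        rw [if_neg (by norm_num)]
        rintro rfl
        exact hc.2 hzw
      · show ¬ z ∈ v 0
        simp [hv]
  · intro h v
    simp only [fml14, Fml.or, Fml.imp, Truth]
    rintro ⟨hA, hB⟩
    push_neg at hA hB
    obtain ⟨y, hxy, hy⟩ := hA
    obtain ⟨z, hxz, hz⟩ := hB
    obtain ⟨⟨hyp, hybp⟩, hyq⟩ := hy
    obtain ⟨⟨hzq, hzbq⟩, hzp⟩ := hz
    have hyz : y ≠ z := fun e => hzp (e ▸ hyp)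
    rcases h y z hxy hxz hyz with hr | hr
    · exact hzp (hybp z hr)
    · exact hyq (hzbq y hr)
end

section
/- Let G = (W,R) be the fan frame with root r and, for each n ∈ ω, a disjoint branch order-isomorphic to (n,<). Let φ be the modal formula □(p∧□p⊃q)∨□(q∧□q⊃p) for distinct propositional variables p, q. Then for every n ∈ ω, the frame G validates the formula ¬φ ⊃ ◇ⁿ⊤. -/
/-- The worlds of the fan frame: the root `none` together with, for each `n ∈ ω`,
a branch `{(n, i) : i < n}`. -/
def FanW : Type := Option ((n : ℕ) × Fin n)

/-- The accessibility relation of the fan frame: the root sees every branch point,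
and `(n, i)` sees `(m, j)` iff `n = m` and `i < j`. -/
def FanR : FanW → FanW → Prop := fun a b =>
  match a, b with
  | none, some _ => True
  | some ⟨n, i⟩, some ⟨m, j⟩ => n = m ∧ (i : ℕ) < (j : ℕ)
  | _, _ => False

lemma chainLem (v : ℕ → Set FanW) : ∀ (k m : ℕ) (i : Fin m), (i : ℕ) + k < m →
    Truth FanR v (Fml.dian k Fml.top) (some ⟨m, i⟩) := by
  intro k
  induction k with
  | zero => intro m i _; trivial
  | succ k ih =>
    intro m i h
    simp only [Fml.dian, Fml.dia, Truth, not_forall]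
    refine ⟨some ⟨m, ⟨(i : ℕ) + 1, by omega⟩⟩, ?_⟩
    push_neg
    exact ⟨⟨rfl, Nat.lt_succ_self _⟩, ih m ⟨(i : ℕ) + 1, by omega⟩ (show (i:ℕ)+1+k < m by omega)⟩

lemma rootDia (v : ℕ → Set FanW) (n : ℕ) : Truth FanR v (Fml.dian n Fml.top) none := by
  cases n with
  | zero => trivial
  | succ k =>
    simp only [Fml.dian, Fml.dia, Truth, not_forall]
    refine ⟨some ⟨k + 1, ⟨0, by omega⟩⟩, ?_⟩
    push_neg
    exact ⟨trivial, chainLem v k (k+1) ⟨0, by omega⟩ (show 0+k < k+1 by omega)⟩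

lemma branchValid (v : ℕ → Set FanW) (m : ℕ) (i : Fin m) :
    Truth FanR v fml14 (some ⟨m, i⟩) := by
  simp only [fml14, Fml.or]
  intro hcon
  obtain ⟨hA, hB⟩ := hcon
  simp only [Fml.imp, Truth, not_forall, not_not, Classical.not_imp, not_and] at hA hB
  obtain ⟨y, hRy, hy⟩ := hA
  obtain ⟨z, hRz, hz⟩ := hB
  obtain ⟨⟨hyp, hybp⟩, hyq⟩ := hy
  obtain ⟨⟨hzq, hzbq⟩, hzp⟩ := hz
  match y, z, hRy, hRz with
  | some ⟨my, jy⟩, some ⟨mz, jz⟩, ⟨hmy, _⟩, ⟨hmz, _⟩ =>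
    subst hmy; subst hmz
    rcases lt_trichotomy (jy : ℕ) (jz : ℕ) with h | h | h
    · exact hzp (hybp (some ⟨m, jz⟩) ⟨rfl, h⟩)
    · exact hzp (by have : jy = jz := Fin.ext h; rw [← this]; exact hyp)
    · exact hyq (hzbq (some ⟨m, jy⟩) ⟨rfl, h⟩)

theorem stmt15 (n : ℕ) :
    Valid FanR (Fml.imp (Fml.neg fml14) (Fml.dian n Fml.top)) := by
  intro v w
  intro hcon
  obtain ⟨h1, h2⟩ := hcon
  match w with
  | none => exact h2 (rootDia v n)
  | some ⟨m, i⟩ => exact h1 (branchValid v m i)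
end

section
/- (Rasiowa–Sikorski.) Let A be a Boolean algebra and Q a countable collection of subsets of A such that every X ∈ Q has a greatest lower bound ⋀X in A. For any a₁, a₂ ∈ A with a₁ ≰ a₂, there exists a prime filter F of A such that a₁ ∈ F, a₂ ∉ F, and for every X ∈ Q, if X ⊆ F then ⋀X ∈ F. -/
open Classical in
/-- The Rasiowa–Sikorski chain: start at `c₀`, and at step `n` either stay
(if `c n` is below every element of `g n`) or intersect with the complement of
a witness `x ∈ g n` with `¬ c n ≤ x`. -/
noncomputable def rsChain {A : Type} [BooleanAlgebra A] (g : ℕ → Set A) (c₀ : A) : ℕ → A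
  | 0 => c₀
  | n + 1 =>
    let c := rsChain g c₀ n
    if h : ∃ x ∈ g n, ¬ c ≤ x then c ⊓ (h.choose)ᶜ else c

theorem rsChain_succ_le {A : Type} [BooleanAlgebra A] (g : ℕ → Set A) (c₀ : A) (n : ℕ) :
    rsChain g c₀ (n + 1) ≤ rsChain g c₀ n := by
  rw [rsChain]
  split <;> simp

theorem rsChain_ne_bot {A : Type} [BooleanAlgebra A] (g : ℕ → Set A) (c₀ : A)
    (h0 : c₀ ≠ ⊥) : ∀ n, rsChain g c₀ n ≠ ⊥ := by
  intro n
  induction n with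
  | zero => exact h0
  | succ n ih =>
    rw [rsChain]
    split
    · rename_i h
      intro hb
      exact h.choose_spec.2 (by rwa [← sdiff_eq, sdiff_eq_bot_iff] at hb)
    · exact ih

theorem rsChain_dichotomy {A : Type} [BooleanAlgebra A] (g : ℕ → Set A) (c₀ : A) (n : ℕ) :
    (∀ x ∈ g n, rsChain g c₀ (n + 1) ≤ x) ∨
      ∃ x ∈ g n, rsChain g c₀ (n + 1) ≤ xᶜ := by
  rw [rsChain]
  split
  · rename_i h
    exact Or.inr ⟨h.choose, h.choose_spec.1, inf_le_right⟩
  · rename_i h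
    push_neg at h
    exact Or.inl h

theorem toBoolRing_sup {A : Type} [BooleanAlgebra A] (x y : A) :
    toBoolRing (x ⊔ y) = toBoolRing x + toBoolRing y + toBoolRing x * toBoolRing y := by
  rw [← toBoolRing_inf, ← toBoolRing_symmDiff, ← toBoolRing_symmDiff,
    symmDiff_symmDiff_inf]

theorem stmt19 {A : Type} [BooleanAlgebra A] (Q : Set (Set A)) (hQ : Q.Countable)
    (inf : Set A → A) (hinf : ∀ X ∈ Q, IsGLB X (inf X))
    (a₁ a₂ : A) (h : ¬ a₁ ≤ a₂) :
    ∃ F : Set A, IsPrimeFilter F ∧ a₁ ∈ F ∧ a₂ ∉ F ∧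
      ∀ X ∈ Q, X ⊆ F → inf X ∈ F := by
  classical
  -- enumerate `Q` (inserting a harmless set to guarantee nonemptiness)
  obtain ⟨g, hg⟩ := (hQ.insert ({⊤} : Set A)).exists_eq_range ⟨{⊤}, Set.mem_insert _ _⟩
  have hgQ : ∀ X ∈ Q, ∃ n, g n = X := by
    intro X hX
    have : X ∈ Set.range g := hg ▸ Set.mem_insert_of_mem _ hX
    obtain ⟨n, hn⟩ := this
    exact ⟨n, hn⟩
  set c : ℕ → A := rsChain g (a₁ ⊓ a₂ᶜ) with hc
  have hc0 : c 0 = a₁ ⊓ a₂ᶜ := rfl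
  have h0ne : a₁ ⊓ a₂ᶜ ≠ ⊥ := by
    rw [← sdiff_eq, Ne, sdiff_eq_bot_iff]; exact h
  have hcne : ∀ n, c n ≠ ⊥ := rsChain_ne_bot g _ h0ne
  have hanti : Antitone c := antitone_nat_of_succ_le (rsChain_succ_le g _)
  -- pass to the associated Boolean ring
  set d : ℕ → AsBoolRing A := fun n => toBoolRing ((c n)ᶜ) with hd
  have hdmul : ∀ m n, m ≤ n → d m * d n = d m := by
    intro m n hmn
    have hle : (c m)ᶜ ≤ (c n)ᶜ := compl_le_compl (hanti hmn)
    rw [← ofBoolRing_le_ofBoolRing_iff (a := d m) (b := d n)] at *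
    simpa [hd] using hle
  set I : Ideal (AsBoolRing A) := Ideal.span (Set.range d) with hI
  have hspan : ∀ x ∈ I, ∃ n, x * d n = x := by
    intro x hx
    rw [hI, Ideal.span, Submodule.span_range_eq_iSup] at hx
    have key : ∀ m n : ℕ, m ≤ n →
        Submodule.span (AsBoolRing A) {d m} ≤ Submodule.span (AsBoolRing A) {d n} := by
      intro m n hmn
      rw [Submodule.span_le, Set.singleton_subset_iff]
      exact Submodule.mem_span_singleton.2
        ⟨d m, by rw [smul_eq_mul]; exact hdmul m n hmn⟩
    have hdir : Directed (· ≤ ·) fun n => Submodule.span (AsBoolRing A) {d n} :=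
      fun m n => ⟨max m n, key _ _ (le_max_left _ _), key _ _ (le_max_right _ _)⟩
    rw [Submodule.mem_iSup_of_directed _ hdir] at hx
    obtain ⟨n, hn⟩ := hx
    obtain ⟨r, hr⟩ := Submodule.mem_span_singleton.1 hn
    rw [smul_eq_mul] at hr
    exact ⟨n, by rw [← hr, mul_assoc, BooleanRing.mul_self]⟩
  have hIone : (1 : AsBoolRing A) ∉ I := by
    intro h1
    obtain ⟨n, hn⟩ := hspan 1 h1
    rw [one_mul] at hn
    have : (c n)ᶜ = ⊤ := by
      have := congrArg ofBoolRing hn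
      simpa [hd] using this
    exact hcne n (by simpa using congrArg compl this)
  obtain ⟨M, hM, hIM⟩ := Ideal.exists_le_maximal I ((Ideal.ne_top_iff_one I).2 hIone)
  have hMp : M.IsPrime := hM.isPrime
  have hM1 : (1 : AsBoolRing A) ∉ M := (Ideal.ne_top_iff_one M).1 hM.ne_top
  refine ⟨{a : A | toBoolRing a ∉ M}, ?_, ?_, ?_, ?_⟩
  case _ =>
    constructor
    · simpa [toBoolRing_top] using hM1
    · simp [toBoolRing_bot, M.zero_mem]
    · intro x hx y hy hxy
      rw [toBoolRing_inf] at hxy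
      rcases hMp.mem_or_mem hxy with h' | h'
      · exact hx h'
      · exact hy h'
    · intro x hx y hle hy
      apply hx
      have hxeq : toBoolRing x = toBoolRing x * toBoolRing y := by
        rw [← toBoolRing_inf, inf_eq_left.2 hle]
      rw [hxeq]
      exact Ideal.mul_mem_left M _ hy
    · intro x y hxy
      by_contra hn
      push_neg at hn
      obtain ⟨hx, hy⟩ := hn
      simp only [Set.mem_setOf_eq, not_not] at hx hy
      apply hxy
      rw [toBoolRing_sup]
      exact M.add_mem (M.add_mem hx hy) (Ideal.mul_mem_right _ M hx)
  all_goals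
    have hcF : ∀ n, toBoolRing (c n) ∉ M := by
      intro n hcn
      have hdn : d n ∈ M := hIM (Ideal.subset_span ⟨n, rfl⟩)
      have : toBoolRing (c n ⊔ (c n)ᶜ) ∈ M := by
        rw [toBoolRing_sup]
        exact M.add_mem (M.add_mem hcn hdn) (Ideal.mul_mem_right _ M hcn)
      rw [sup_compl_eq_top, toBoolRing_top] at this
      exact hM1 this
    have hcomplM : ∀ a : A, toBoolRing a ∉ M → toBoolRing (aᶜ) ∈ M := by
      intro a ha
      have h0 : toBoolRing a * toBoolRing (aᶜ) ∈ M := by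
        rw [← toBoolRing_inf, inf_compl_eq_bot, toBoolRing_bot]; exact M.zero_mem
      rcases hMp.mem_or_mem h0 with h' | h'
      · exact absurd h' ha
      · exact h'
    have hmem_of_le : ∀ x y : A, toBoolRing x ∉ M → x ≤ y → toBoolRing y ∉ M := by
      intro x y hx hle hy
      apply hx
      have : toBoolRing x = toBoolRing x * toBoolRing y := by
        rw [← toBoolRing_inf, inf_eq_left.2 hle]
      rw [this]
      exact Ideal.mul_mem_left M _ hy
  case _ =>
    exact hmem_of_le _ _ (hcF 0) (hc0 ▸ inf_le_left)
  case _ =>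
    intro ha2
    exact (hmem_of_le _ _ (hcF 0) (hc0 ▸ inf_le_right)) (hcomplM _ ha2)
  case _ =>
    intro X hX hXF
    obtain ⟨n, hn⟩ := hgQ X hX
    rcases rsChain_dichotomy g (a₁ ⊓ a₂ᶜ) n with h1 | h2
    · rw [hn] at h1
      have hlb : c (n + 1) ≤ inf X := (hinf X hX).2 h1
      exact hmem_of_le _ _ (hcF (n + 1)) hlb
    · rw [hn] at h2
      obtain ⟨x, hxX, hxc⟩ := h2
      have hxcF : toBoolRing (xᶜ) ∉ M := hmem_of_le _ _ (hcF (n + 1)) hxc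
      have hxF : toBoolRing x ∉ M := hXF hxX
      exact absurd (hcomplM x hxF) hxcF
end
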